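/- arXiv:math/0008009 — 11 statements merged into one kernel-verified Lean document; each statement's English description precedes it below -/
import Mathlib

section
/- Any stable set consisting only of pendant vertices of a graph G is contained in some maximum stable (independent) set of G. -/
open Finset SimpleGraph
open scoped Classical

variable {V : Type*}

/-- A stable (independent) set of vertices. -/
def stableSet (G : SimpleGraph V) (S : Finset V) : Prop :=
  ∀ u ∈ S, ∀ w ∈ S, ¬ G.Adj u w

/-- A maximum stable set. -/
def maxStableSet [Fintype V] (G : SimpleGraph V) (S : Finset V) : Prop :=
  stableSet G S ∧ ∀ S' : Finset V, stableSet G S' → S'.card ≤ S.card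

/-- The independence number α(G). -/
noncomputable def alphaNum [Fintype V] (G : SimpleGraph V) : ℕ :=
  ((Finset.univ : Finset V).powerset.filter (fun S => stableSet G S)).sup Finset.card

/-- core(G): the intersection of all maximum stable sets of G. -/
noncomputable def coreSet [Fintype V] (G : SimpleGraph V) : Finset V :=
  Finset.univ.filter (fun v => ∀ S : Finset V, maxStableSet G S → v ∈ S)

/-- A pendant vertex: a vertex with exactly one neighbor. -/
def pendant (G : SimpleGraph V) (v : V) : Prop :=
  ∃! w, G.Adj v w

/-- {A, B} is a bipartition of G into color classes. -/
def isBipartition [Fintype V] (G : SimpleGraph V) (A B : Finset V) : Prop :=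
  Disjoint A B ∧ A ∪ B = Finset.univ ∧
    ∀ u v, G.Adj u v → (u ∈ A ∧ v ∈ B) ∨ (u ∈ B ∧ v ∈ A)


/-! Take a maximum stable set `S` and swap in `A`: remove from `S` the vertices adjacent to `A`
and add `A`. The result is stable. Every removed vertex `w` has a neighbour `v ∈ A`, which is
not in `S`, and `w` is the only neighbour of `v`; so the removed vertices inject into `A \ S`,
and the new stable set is at least as large as `S`. -/

lemma pendant.neighborSet_subsingleton {G : SimpleGraph V} {v : V} (h : pendant G v) :
    (G.neighborSet v).Subsingleton :=
  fun _ hw _ hw' => h.unique hw hw'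

lemma stableSet.filter {G : SimpleGraph V} {S : Finset V} (hS : stableSet G S)
    (p : V → Prop) [DecidablePred p] : stableSet G (S.filter p) :=
  fun u hu w hw => hS u (mem_of_mem_filter u hu) w (mem_of_mem_filter w hw)

lemma stableSet_union {G : SimpleGraph V} {S T : Finset V} (hS : stableSet G S)
    (hT : stableSet G T) (hST : ∀ u ∈ S, ∀ w ∈ T, ¬ G.Adj u w) : stableSet G (S ∪ T) := by
  intro u hu w hw
  rcases mem_union.1 hu with hu | hu <;> rcases mem_union.1 hw with hw | hw
  · exact hS u hu w hw
  · exact hST u hu w hw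
  · exact fun h => hST w hw u hu h.symm
  · exact hT u hu w hw

lemma exists_maxStableSet [Fintype V] (G : SimpleGraph V) : ∃ S : Finset V, maxStableSet G S := by
  obtain ⟨S, hS, hmax⟩ := (univ.powerset.filter (stableSet G)).exists_max_image card
    ⟨∅, by simp [stableSet]⟩
  exact ⟨S, (mem_filter.1 hS).2, fun T hT => hmax T (by simp [hT])⟩

lemma card_filter_adj_le_card_sdiff {G : SimpleGraph V} {S A : Finset V} (hS : stableSet G S)
    (hA : ∀ v ∈ A, (G.neighborSet v).Subsingleton) :
    #(S.filter fun w => ∃ v ∈ A, G.Adj v w) ≤ #(A \ S) := by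
  refine card_le_card_of_forall_subsingleton (fun w v => G.Adj v w) ?_ ?_
  · intro w hw
    obtain ⟨hwS, v, hvA, hvw⟩ := mem_filter.1 hw
    exact ⟨v, mem_sdiff.2 ⟨hvA, fun hvS => hS v hvS w hwS hvw⟩, hvw⟩
  · intro v hv
    exact (hA v (mem_sdiff.1 hv).1).anti fun w hw => hw.2

lemma card_le_card_filter_not_adj_union {G : SimpleGraph V} {S A : Finset V}
    (hS : stableSet G S) (hA : ∀ v ∈ A, (G.neighborSet v).Subsingleton) :
    #S ≤ #((S.filter fun w => ¬ ∃ v ∈ A, G.Adj v w) ∪ A) := by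
  set far := S.filter fun w => ¬ ∃ v ∈ A, G.Adj v w
  have hdisj : Disjoint far (A \ S) :=
    disjoint_left.2 fun w hw hw' => (mem_sdiff.1 hw').2 (mem_of_mem_filter w hw)
  calc #S = #(S.filter fun w => ∃ v ∈ A, G.Adj v w) + #far :=
        (card_filter_add_card_filter_not _).symm
    _ ≤ #(A \ S) + #far := Nat.add_le_add_right (card_filter_adj_le_card_sdiff hS hA) _
    _ = #(far ∪ (A \ S)) := by rw [card_union_of_disjoint hdisj, add_comm]
    _ ≤ #(far ∪ A) := card_le_card (union_subset_union_right sdiff_subset)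

theorem stmt0 [Fintype V] (G : SimpleGraph V) (A : Finset V)
    (hA : stableSet G A) (hp : ∀ v ∈ A, pendant G v) :
    ∃ S : Finset V, maxStableSet G S ∧ A ⊆ S := by
  obtain ⟨S, hS, hSmax⟩ := exists_maxStableSet G
  have hsub : ∀ v ∈ A, (G.neighborSet v).Subsingleton := fun v hv =>
    (hp v hv).neighborSet_subsingleton
  refine ⟨(S.filter fun w => ¬ ∃ v ∈ A, G.Adj v w) ∪ A, ⟨?_, fun T hT => ?_⟩, subset_union_right⟩
  · refine stableSet_union (hS.filter _) hA fun u hu w hw huw => ?_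
    exact (mem_filter.1 hu).2 ⟨w, hw, huw.symm⟩
  · exact (hSmax T hT).trans (card_le_card_filter_not_adj_union hS hsub)
end

section
/- If T is a tree on n ≥ 2 vertices and S is a stable set of T with |S| ≥ n/2, then S contains at least one pendant vertex of T. -/
/-!
Edges incident to distinct vertices of a stable set are distinct, so the degrees over a stable
set `S` sum to at most the number of edges, which is `n - 1` in a tree. If no vertex of `S` were
pendant, every vertex of `S` would have degree at least `2` (a connected graph on at least two
vertices has no isolated vertex), giving `2 |S| ≤ n - 1 < n ≤ 2 |S|`.
-/

open Finset SimpleGraph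
open scoped Classical

variable {V : Type*}

theorem pendant_iff_degree_eq_one [Fintype V] {G : SimpleGraph V} {v : V} :
    pendant G v ↔ G.degree v = 1 :=
  degree_eq_one_iff_existsUnique_adj.symm

theorem pairwiseDisjoint_incidenceFinset_of_stableSet {G : SimpleGraph V} [Fintype V]
    {S : Finset V} (hS : stableSet G S) : (S : Set V).PairwiseDisjoint (G.incidenceFinset ·) := by
  intro u hu w hw huw
  rw [Function.onFun, ← disjoint_coe, coe_incidenceFinset, coe_incidenceFinset,
    Set.disjoint_iff_inter_eq_empty]
  exact G.incidenceSet_inter_incidenceSet_of_not_adj (hS u hu w hw) huw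

theorem sum_degree_le_card_edgeFinset_of_stableSet [Fintype V] {G : SimpleGraph V}
    {S : Finset V} (hS : stableSet G S) : ∑ v ∈ S, G.degree v ≤ #G.edgeFinset :=
  calc ∑ v ∈ S, G.degree v = #(S.biUnion (G.incidenceFinset ·)) := by
        simp only [card_biUnion (pairwiseDisjoint_incidenceFinset_of_stableSet hS),
          card_incidenceFinset_eq_degree]
    _ ≤ #G.edgeFinset := card_le_card (biUnion_subset.2 fun v _ ↦ G.incidenceFinset_subset v)

theorem SimpleGraph.Preconnected.two_mul_card_le_card_edgeFinset_of_stableSet [Fintype V]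
    [Nontrivial V] {G : SimpleGraph V} (hG : G.Preconnected) {S : Finset V} (hS : stableSet G S)
    (hS_pendant : ∀ v ∈ S, ¬ pendant G v) : 2 * #S ≤ #G.edgeFinset := by
  have two_le_degree : ∀ v ∈ S, 2 ≤ G.degree v := fun v hv ↦ by
    have := hG.degree_pos_of_nontrivial v
    have := mt pendant_iff_degree_eq_one.2 (hS_pendant v hv)
    omega
  calc 2 * #S = ∑ _v ∈ S, 2 := by rw [sum_const, smul_eq_mul, mul_comm]
    _ ≤ ∑ v ∈ S, G.degree v := sum_le_sum two_le_degree
    _ ≤ #G.edgeFinset := sum_degree_le_card_edgeFinset_of_stableSet hS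

theorem stmt1 [Fintype V] (T : SimpleGraph V) (hT : T.IsTree)
    (hn : 2 ≤ Fintype.card V) (S : Finset V) (hS : stableSet T S)
    (hcard : Fintype.card V ≤ 2 * S.card) :
    ∃ v ∈ S, pendant T v := by
  by_contra! hS_pendant
  have : Nontrivial V := Fintype.one_lt_card_iff_nontrivial.1 hn
  have hedges := hT.connected.preconnected.two_mul_card_le_card_edgeFinset_of_stableSet hS
    hS_pendant
  have := hT.card_edgeFinset
  omega
end

section
/- If T is a tree on n ≥ 2 vertices with independence number α(T) = n/2, and {A, B} is the bipartition of T into its two color classes, then both A and B contain at least one pendant vertex of T. -/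
open Finset SimpleGraph
open scoped Classical

variable {V : Type*}

lemma aux_pendant [Fintype V] (T : SimpleGraph V) (hT : T.IsTree)
    (hn : 2 ≤ Fintype.card V) (A B : Finset V) (hAB : isBipartition T A B)
    (halpha : 2 * alphaNum T = Fintype.card V) :
    ∃ v ∈ A, pendant T v := by
  classical
  obtain ⟨hdisj, huniv, hadj⟩ := hAB
  -- A and B are stable
  have hstabA : stableSet T A := by
    intro u hu w hw h
    rcases hadj u w h with ⟨h1, h2⟩ | ⟨h1, h2⟩
    · exact Finset.disjoint_left.mp hdisj hw h2
    · exact Finset.disjoint_left.mp hdisj hu h1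
  have hstabB : stableSet T B := by
    intro u hu w hw h
    rcases hadj u w h with ⟨h1, h2⟩ | ⟨h1, h2⟩
    · exact Finset.disjoint_left.mp hdisj h1 hu
    · exact Finset.disjoint_left.mp hdisj h2 hw
  have hle : ∀ S : Finset V, stableSet T S → S.card ≤ alphaNum T := by
    intro S hS
    apply Finset.le_sup (f := Finset.card)
    simp [Finset.mem_filter, Finset.mem_powerset, hS]
  have hsum : A.card + B.card = Fintype.card V := by
    rw [← Finset.card_union_of_disjoint hdisj, huniv, Finset.card_univ]
  have hAcard : 2 * A.card = Fintype.card V := by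
    have h1 := hle A hstabA
    have h2 := hle B hstabB
    omega
  -- every vertex has a neighbor
  have hdeg1 : ∀ v : V, 1 ≤ T.degree v := by
    intro v
    rw [Nat.one_le_iff_ne_zero, ← Nat.pos_iff_ne_zero, SimpleGraph.degree_pos_iff_exists_adj]
    obtain ⟨w, hw⟩ := Fintype.exists_ne_of_one_lt_card (by omega) v
    obtain ⟨p⟩ := hT.isConnected.preconnected v w
    cases p with
    | nil => exact absurd rfl hw.symm
    | cons h _ => exact ⟨_, h⟩
  -- by contradiction: no pendant in A
  by_contra hno
  push_neg at hno
  have hdeg2 : ∀ v ∈ A, 2 ≤ T.degree v := by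
    intro v hv
    have h1 := hdeg1 v
    rcases Nat.lt_or_ge (T.degree v) 2 with h | h
    · exfalso
      have : T.degree v = 1 := by omega
      rw [← SimpleGraph.card_neighborFinset_eq_degree, Finset.card_eq_one] at this
      obtain ⟨w, hw⟩ := this
      refine hno v hv ⟨w, ?_, ?_⟩
      · have : w ∈ T.neighborFinset v := by rw [hw]; exact Finset.mem_singleton_self w
        exact (SimpleGraph.mem_neighborFinset _ _ _).mp this
      · intro y hy
        have : y ∈ T.neighborFinset v := (SimpleGraph.mem_neighborFinset _ _ _).mpr hy
        rw [hw, Finset.mem_singleton] at this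
        exact this
    · exact h
  -- sum of degrees over A equals number of edges
  have hAopp : ∀ (u v : V), T.Adj u v → u ∈ A → v ∉ A := by
    intro u v h hu hv
    exact hstabA u hu v hv h
  set D : Finset T.Dart := Finset.univ.filter (fun d => d.fst ∈ A) with hD
  have hDcard : D.card = ∑ v ∈ A, T.degree v := by
    rw [Finset.card_eq_sum_card_fiberwise (f := fun d : T.Dart => d.fst) (s := D) (t := A)
      (fun d hd => (Finset.mem_filter.mp hd).2)]
    refine Finset.sum_congr rfl (fun v hv => ?_)
    rw [← SimpleGraph.dart_fst_fiber_card_eq_degree]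
    congr 1
    ext d
    simp only [hD, Finset.mem_filter, Finset.mem_univ, true_and]
    constructor
    · rintro ⟨_, h⟩; exact h
    · rintro rfl; exact ⟨hv, rfl⟩
  have hDedge : D.card = T.edgeFinset.card := by
    apply Finset.card_bij (fun d _ => d.edge)
    · intro d hd
      exact SimpleGraph.mem_edgeFinset.mpr d.edge_mem
    · intro d1 h1 d2 h2 he
      rcases (SimpleGraph.dart_edge_eq_iff d1 d2).mp he with h | h
      · exact h
      · exfalso
        have h1A : d1.fst ∈ A := (Finset.mem_filter.mp h1).2
        have h2A : d2.fst ∈ A := (Finset.mem_filter.mp h2).2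
        have : d1.fst = d2.snd := by rw [h]; rfl
        exact hAopp d2.fst d2.snd d2.adj h2A (this ▸ h1A)
    · intro e he
      rw [SimpleGraph.mem_edgeFinset] at he
      induction e with
      | h u v =>
        have hadj' : T.Adj u v := he
        rcases hadj u v hadj' with ⟨hu, _⟩ | ⟨_, hv⟩
        · exact ⟨⟨(u, v), hadj'⟩, Finset.mem_filter.mpr ⟨Finset.mem_univ _, hu⟩, rfl⟩
        · refine ⟨⟨(v, u), hadj'.symm⟩, Finset.mem_filter.mpr ⟨Finset.mem_univ _, hv⟩, ?_⟩
          simp [SimpleGraph.Dart.edge, Sym2.eq_swap]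
  have hedges : T.edgeFinset.card + 1 = Fintype.card V := hT.card_edgeFinset
  have hsum2 : 2 * A.card ≤ ∑ v ∈ A, T.degree v := by
    calc 2 * A.card = ∑ _v ∈ A, 2 := by rw [Finset.sum_const, smul_eq_mul, mul_comm]
    _ ≤ ∑ v ∈ A, T.degree v := Finset.sum_le_sum hdeg2
  omega

theorem stmt4 [Fintype V] (T : SimpleGraph V) (hT : T.IsTree)
    (hn : 2 ≤ Fintype.card V) (A B : Finset V) (hAB : isBipartition T A B)
    (halpha : 2 * alphaNum T = Fintype.card V) :
    (∃ v ∈ A, pendant T v) ∧ (∃ v ∈ B, pendant T v) := by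
  have hBA : isBipartition T B A := by
    obtain ⟨h1, h2, h3⟩ := hAB
    exact ⟨h1.symm, by rw [Finset.union_comm]; exact h2,
      fun u v h => (h3 u v h).symm⟩
  exact ⟨aux_pendant T hT hn A B hAB halpha, aux_pendant T hT hn B A hBA halpha⟩
end

section
/- Let T be a tree with bipartition {A, B}. Then T has a unique maximum stable set S with V(T) − S also stable (i.e., Ω(T) = {A} or Ω(T) = {B}) if and only if all pendant vertices of T lie in A or all pendant vertices of T lie in B. -/
open Finset SimpleGraph
open scoped Classical
set_option linter.unusedSectionVars false

variable {V : Type*}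

section Aux

variable [Fintype V] {T : SimpleGraph V} {A B : Finset V}

lemma bip_symm (h : isBipartition T A B) : isBipartition T B A :=
  ⟨h.1.symm, by rw [Finset.union_comm]; exact h.2.1,
   fun u v hadj => (h.2.2 u v hadj).symm⟩

lemma bip_stableA (h : isBipartition T A B) : stableSet T A := by
  intro u hu w hw hadj
  rcases h.2.2 u w hadj with ⟨_, hwB⟩ | ⟨huB, _⟩
  · exact Finset.disjoint_left.mp h.1 hw hwB
  · exact Finset.disjoint_left.mp h.1 hu huB

lemma bip_mem_B (h : isBipartition T A B) {v : V} (hv : v ∉ A) : v ∈ B := by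
  have : v ∈ A ∪ B := h.2.1 ▸ Finset.mem_univ v
  rcases Finset.mem_union.mp this with h' | h'
  · exact absurd h' hv
  · exact h'

lemma bip_side (h : isBipartition T A B) {u v : V} (hadj : T.Adj u v) :
    (u ∈ A ↔ v ∉ A) := by
  rcases h.2.2 u v hadj with ⟨huA, hvB⟩ | ⟨huB, hvA⟩
  · exact ⟨fun _ => Finset.disjoint_right.mp h.1 hvB, fun _ => huA⟩
  · exact ⟨fun huA => absurd huB (Finset.disjoint_left.mp h.1 huA),
      fun hv => absurd hvA hv⟩

lemma bip_parity (h : isBipartition T A B) :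
    ∀ {u v : V} (p : T.Walk u v), ((u ∈ A ↔ v ∈ A) ↔ Even p.length)
  | u, _, SimpleGraph.Walk.nil => by simp
  | u, v, SimpleGraph.Walk.cons hadj p => by
    have IH := bip_parity h p
    have hs := bip_side h hadj
    simp only [SimpleGraph.Walk.length_cons, Nat.even_add_one]
    tauto

lemma bip_dist_ne (h : isBipartition T A B) (hc : T.Connected) {r u v : V}
    (hadj : T.Adj u v) : T.dist r u ≠ T.dist r v := by
  intro heq
  obtain ⟨wu, hwu⟩ := hc.exists_walk_length_eq_dist r u
  obtain ⟨wv, hwv⟩ := hc.exists_walk_length_eq_dist r v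
  have hu := bip_parity h wu
  have hv := bip_parity h wv
  rw [hwu] at hu
  rw [hwv, ← heq] at hv
  have hs := bip_side h hadj
  tauto

lemma unique_parent (hT : T.IsTree) {r v u1 u2 : V}
    (h1 : T.Adj u1 v) (h2 : T.Adj u2 v)
    (hd1 : T.dist r u1 < T.dist r v) (hd2 : T.dist r u2 < T.dist r v) :
    u1 = u2 := by
  have conn := hT.isConnected
  have mk : ∀ (u : V) (h : T.Adj u v), T.dist r u < T.dist r v →
      ∃ m : T.Walk r v, m.IsPath ∧ m.reverse.getVert 1 = u := by
    intro u h hd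
    obtain ⟨w, hw⟩ := conn.exists_walk_length_eq_dist r u
    have hqp : w.bypass.IsPath := w.bypass_isPath
    have hql : w.bypass.length ≤ T.dist r u := hw ▸ w.length_bypass_le
    have hvq : v ∉ w.bypass.support := by
      intro hv
      have h1' := SimpleGraph.dist_le (w.bypass.takeUntil v hv)
      have h2' := w.bypass.length_takeUntil_le hv
      omega
    refine ⟨w.bypass.concat h, ?_, ?_⟩
    · rw [← SimpleGraph.Walk.isPath_reverse_iff, SimpleGraph.Walk.reverse_concat]
      exact ((SimpleGraph.Walk.isPath_reverse_iff w.bypass).mpr hqp).cons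
        (by simp only [SimpleGraph.Walk.support_reverse, List.mem_reverse]; exact hvq)
    · rw [SimpleGraph.Walk.reverse_concat, SimpleGraph.Walk.getVert_cons_succ (n := 0),
        SimpleGraph.Walk.getVert_zero]
  obtain ⟨m1, hp1, hg1⟩ := mk u1 h1 hd1
  obtain ⟨m2, hp2, hg2⟩ := mk u2 h2 hd2
  have hm : m1 = m2 := by
    have := hT.IsAcyclic.path_unique ⟨m1, hp1⟩ ⟨m2, hp2⟩
    exact congrArg Subtype.val this
  rw [← hg1, ← hg2, hm]

lemma exists_adj (hT : T.IsTree) (hn : 2 ≤ Fintype.card V) (b : V) :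
    ∃ x, T.Adj b x := by
  obtain ⟨w, hwne⟩ := Fintype.exists_ne_of_one_lt_card (by omega) b
  obtain ⟨p⟩ := hT.isConnected.preconnected b w
  cases p with
  | nil => exact absurd rfl hwne
  | cons h _ => exact ⟨_, h⟩

lemma child_exists (hT : T.IsTree) (hn : 2 ≤ Fintype.card V)
    (h : isBipartition T A B) (hpend : ∀ v, pendant T v → v ∈ A)
    (r b : V) (hb : b ∈ B) : ∃ c, T.Adj b c ∧ T.dist r b < T.dist r c := by
  obtain ⟨n1, h1⟩ := exists_adj hT hn b
  have hnp : ¬ pendant T b := fun hp =>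
    Finset.disjoint_left.mp h.1 (hpend b hp) hb
  simp only [pendant, ExistsUnique, not_exists, not_and, not_forall,
    Classical.not_imp] at hnp
  by_contra hcon
  push_neg at hcon
  obtain ⟨n2, h2, hne⟩ := hnp n1 h1
  have d1 : T.dist r n1 < T.dist r b :=
    lt_of_le_of_ne (hcon n1 h1) fun he =>
      bip_dist_ne h hT.isConnected h1 he.symm
  have d2 : T.dist r n2 < T.dist r b :=
    lt_of_le_of_ne (hcon n2 h2) fun he =>
      bip_dist_ne h hT.isConnected h2 he.symm
  exact hne (unique_parent hT h2.symm h1.symm d2 d1)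

lemma key_lt (hT : T.IsTree) (hn : 2 ≤ Fintype.card V)
    (h : isBipartition T A B) (hpend : ∀ v, pendant T v → v ∈ A)
    {S : Finset V} (hS : stableSet T S) (hbx : (S ∩ B).Nonempty) :
    S.card < A.card := by
  obtain ⟨b0, hb0⟩ := hbx
  have hb0S : b0 ∈ S := (Finset.mem_inter.mp hb0).1
  have hb0B : b0 ∈ B := (Finset.mem_inter.mp hb0).2
  obtain ⟨r, hr⟩ := exists_adj hT hn b0
  have hrA : r ∈ A := by
    rcases h.2.2 b0 r hr with ⟨hbA, _⟩ | ⟨_, hrA⟩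
    · exact absurd hbA fun hA => Finset.disjoint_left.mp h.1 hA hb0B
    · exact hrA
  have hrS : r ∉ S := fun hrS => hS b0 hb0S r hrS hr
  -- the child map
  set f : V → V := fun b =>
    if hb : ∃ c, T.Adj b c ∧ T.dist r b < T.dist r c then hb.choose else b with hf
  have hmaps : ∀ b ∈ S ∩ B, f b ∈ (A \ S).erase r := by
    intro b hbmem
    have hbS := (Finset.mem_inter.mp hbmem).1
    have hbB := (Finset.mem_inter.mp hbmem).2
    have hex := child_exists hT hn h hpend r b hbB
    have hfb : f b = hex.choose := by simp only [hf, dif_pos hex]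
    obtain ⟨hadj, hdist⟩ := hex.choose_spec
    rw [hfb]
    have hcA : hex.choose ∈ A := by
      rcases h.2.2 b hex.choose hadj with ⟨hbA, _⟩ | ⟨_, hcA⟩
      · exact absurd hbA fun hA => Finset.disjoint_left.mp h.1 hA hbB
      · exact hcA
    have hcS : hex.choose ∉ S := fun hcS => hS b hbS hex.choose hcS hadj
    have hcr : hex.choose ≠ r := by
      intro he
      rw [he, SimpleGraph.dist_self] at hdist
      omega
    exact Finset.mem_erase.mpr ⟨hcr, Finset.mem_sdiff.mpr ⟨hcA, hcS⟩⟩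
  have hinj : Set.InjOn f ↑(S ∩ B) := by
    intro b1 hb1 b2 hb2 hfe
    simp only [Finset.coe_inter, Set.mem_inter_iff, Finset.mem_coe] at hb1 hb2
    have hex1 := child_exists hT hn h hpend r b1 hb1.2
    have hex2 := child_exists hT hn h hpend r b2 hb2.2
    have hf1 : f b1 = hex1.choose := by simp only [hf, dif_pos hex1]
    have hf2 : f b2 = hex2.choose := by simp only [hf, dif_pos hex2]
    obtain ⟨hadj1, hdist1⟩ := hex1.choose_spec
    obtain ⟨hadj2, hdist2⟩ := hex2.choose_spec
    rw [hf1, hf2] at hfe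
    rw [hfe] at hadj1 hdist1
    exact unique_parent hT hadj1 hadj2 hdist1 hdist2
  have hcard : (S ∩ B).card ≤ ((A \ S).erase r).card :=
    Finset.card_le_card_of_injOn f hmaps hinj
  have h1 : ((A \ S).erase r).card = (A \ S).card - 1 :=
    Finset.card_erase_of_mem (Finset.mem_sdiff.mpr ⟨hrA, hrS⟩)
  have h2 : 1 ≤ (A \ S).card :=
    Finset.card_pos.mpr ⟨r, Finset.mem_sdiff.mpr ⟨hrA, hrS⟩⟩
  have h3 : (A ∩ S).card + (A \ S).card = A.card :=
    Finset.card_inter_add_card_sdiff A S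
  have h4 : (S ∩ A).card + (S ∩ B).card = S.card := by
    rw [← Finset.card_union_of_disjoint]
    · congr 1
      rw [← Finset.inter_union_distrib_left, h.2.1, Finset.inter_univ]
    · exact Finset.disjoint_left.mpr fun a ha hb =>
        Finset.disjoint_left.mp h.1 (Finset.mem_inter.mp ha).2
          (Finset.mem_inter.mp hb).2
  rw [Finset.inter_comm] at h3
  omega

lemma backward (hT : T.IsTree) (hn : 2 ≤ Fintype.card V)
    (h : isBipartition T A B) (hpend : ∀ v, pendant T v → v ∈ A) :
    ∀ S : Finset V, maxStableSet T S ↔ S = A := by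
  have hstA := bip_stableA h
  have hle : ∀ S' : Finset V, stableSet T S' → S'.card ≤ A.card := by
    intro S' hS'
    by_cases hbx : (S' ∩ B).Nonempty
    · exact le_of_lt (key_lt hT hn h hpend hS' hbx)
    · have hsub : S' ⊆ A := by
        intro s hs
        by_contra hsA
        exact hbx ⟨s, Finset.mem_inter.mpr ⟨hs, bip_mem_B h hsA⟩⟩
      exact Finset.card_le_card hsub
  intro S
  constructor
  · rintro ⟨hstS, hmax⟩
    have hAle : A.card ≤ S.card := hmax A hstA
    by_cases hbx : (S ∩ B).Nonempty
    · exact absurd (key_lt hT hn h hpend hstS hbx) (by omega)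
    · have hsub : S ⊆ A := by
        intro s hs
        by_contra hsA
        exact hbx ⟨s, Finset.mem_inter.mpr ⟨hs, bip_mem_B h hsA⟩⟩
      exact Finset.eq_of_subset_of_card_le hsub hAle
  · rintro rfl
    exact ⟨hstA, hle⟩

lemma forward (h : isBipartition T A B)
    (hΩ : ∀ S : Finset V, maxStableSet T S ↔ S = A) :
    ∀ v : V, pendant T v → v ∈ A := by
  intro v hv
  obtain ⟨w, hw, huniq⟩ := hv
  by_contra hvA
  have hvB : v ∈ B := bip_mem_B h hvA
  have hwA : w ∈ A := by
    rcases h.2.2 v w hw with ⟨hvA', _⟩ | ⟨_, hwA⟩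
    · exact absurd hvA' hvA
    · exact hwA
  have hmaxA : maxStableSet T A := (hΩ A).mpr rfl
  set S' : Finset V := insert v (A.erase w) with hS'
  have hstS' : stableSet T S' := by
    intro u1 hu1 u2 hu2 hadj
    rcases Finset.mem_insert.mp hu1 with rfl | hu1'
    · rcases Finset.mem_insert.mp hu2 with rfl | hu2'
      · exact T.loopless.irrefl _ hadj
      · exact (Finset.mem_erase.mp hu2').1 (huniq u2 hadj)
    · rcases Finset.mem_insert.mp hu2 with rfl | hu2'
      · exact (Finset.mem_erase.mp hu1').1 (huniq u1 hadj.symm)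
      · exact bip_stableA h u1 (Finset.mem_erase.mp hu1').2 u2
          (Finset.mem_erase.mp hu2').2 hadj
  have hvnotin : v ∉ A.erase w := fun hmem =>
    hvA (Finset.mem_erase.mp hmem).2
  have hcardS' : S'.card = A.card := by
    rw [hS', Finset.card_insert_of_notMem hvnotin,
      Finset.card_erase_of_mem hwA]
    have : 1 ≤ A.card := Finset.card_pos.mpr ⟨w, hwA⟩
    omega
  have hmaxS' : maxStableSet T S' := by
    refine ⟨hstS', fun S'' hS'' => ?_⟩
    rw [hcardS']
    exact hmaxA.2 S'' hS''
  have hSA : S' = A := (hΩ S').mp hmaxS'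
  have hwS' : w ∈ S' := hSA ▸ hwA
  rcases Finset.mem_insert.mp hwS' with rfl | hmem
  · exact hvA hwA
  · exact (Finset.mem_erase.mp hmem).1 rfl

end Aux

theorem stmt6 [Fintype V] (T : SimpleGraph V) (hT : T.IsTree)
    (hn : 2 ≤ Fintype.card V) (A B : Finset V) (hAB : isBipartition T A B) :
    ((∀ S : Finset V, maxStableSet T S ↔ S = A) ∨
     (∀ S : Finset V, maxStableSet T S ↔ S = B)) ↔
    ((∀ v : V, pendant T v → v ∈ A) ∨ (∀ v : V, pendant T v → v ∈ B)) := by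
  constructor
  · rintro (h | h)
    · exact Or.inl (forward hAB h)
    · exact Or.inr (forward (bip_symm hAB) h)
  · rintro (h | h)
    · exact Or.inl (backward hT hn hAB h)
    · exact Or.inr (backward hT hn (bip_symm hAB) h)
end

section
/- If T is a tree with bipartition {A, B} and S is a maximal stable set of T with |S| > min(|A|, |B|), then S contains a pendant vertex of T. -/
open Finset SimpleGraph
open scoped Classical

variable {V : Type*}

/-- A maximal stable set. -/
def maximalStableSet (G : SimpleGraph V) (S : Finset V) : Prop :=
  stableSet G S ∧ ∀ S' : Finset V, stableSet G S' → S ⊆ S' → S' = S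

section Aux
variable [Fintype V] {T : SimpleGraph V} {A B : Finset V}

lemma adj_mem_iff (hAB : isBipartition T A B) {x y : V} (h : T.Adj x y) :
    (x ∈ A ↔ ¬ y ∈ A) := by
  obtain ⟨hd, hu, hadj⟩ := hAB
  have hd' := Finset.disjoint_left.mp hd
  rcases hadj x y h with ⟨hx, hy⟩ | ⟨hx, hy⟩
  · have : y ∉ A := fun hyA => (Finset.disjoint_left.mp hd hyA) hy
    tauto
  · have : x ∉ A := fun hxA => (hd' hxA) hx
    tauto

lemma walk_parity (hAB : isBipartition T A B) :
    ∀ {x y : V} (p : T.Walk x y), Even p.length ↔ (x ∈ A ↔ y ∈ A)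
  | _, _, .nil => by simp
  | _, _, .cons h p => by
    rw [Walk.length_cons, Nat.even_add_one, walk_parity hAB p]
    have := adj_mem_iff hAB h
    tauto

lemma adj_dist_ne (hT : T.IsTree) (hAB : isBipartition T A B) {u v : V} (h : T.Adj u v)
    (r : V) : T.dist u r ≠ T.dist v r := by
  obtain ⟨pu, -, hpu⟩ := hT.isConnected.exists_path_of_dist u r
  obtain ⟨pv, -, hpv⟩ := hT.isConnected.exists_path_of_dist v r
  intro he
  have h1 := walk_parity hAB pu
  have h2 := walk_parity hAB pv
  rw [hpu] at h1; rw [hpv] at h2; rw [he] at h1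
  have := adj_mem_iff hAB h
  tauto

lemma adj_dist (hT : T.IsTree) (hAB : isBipartition T A B) {u v : V} (h : T.Adj u v)
    (r : V) : T.dist u r = T.dist v r + 1 ∨ T.dist v r = T.dist u r + 1 := by
  have h1 : T.dist u r ≤ T.dist u v + T.dist v r := hT.isConnected.dist_triangle
  have h2 : T.dist v r ≤ T.dist v u + T.dist u r := hT.isConnected.dist_triangle
  rw [dist_eq_one_iff_adj.mpr h] at h1
  rw [dist_eq_one_iff_adj.mpr h.symm] at h2
  have := adj_dist_ne hT hAB h r
  omega

omit [Fintype V] in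
lemma unique_parent_s8 (hT : T.IsTree) {r v u w : V} (hu : T.Adj v u) (hw : T.Adj v w)
    (hdu : T.dist u r + 1 = T.dist v r) (hdw : T.dist w r + 1 = T.dist v r) : u = w := by
  obtain ⟨pu, hpu, hlu⟩ := hT.isConnected.exists_path_of_dist u r
  obtain ⟨pw, hpw, hlw⟩ := hT.isConnected.exists_path_of_dist w r
  have hvs : ∀ {x : V} (p : T.Walk x r), p.length = T.dist x r →
      T.dist x r + 1 = T.dist v r → v ∉ p.support := by
    intro x p hl hd hv
    have h1 : T.dist v r ≤ (p.dropUntil v hv).length := dist_le _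
    have h2 := Walk.length_dropUntil_le p hv
    omega
  have hp1 : (Walk.cons hu pu).IsPath := by
    rw [Walk.cons_isPath_iff]; exact ⟨hpu, hvs pu hlu hdu⟩
  have hp2 : (Walk.cons hw pw).IsPath := by
    rw [Walk.cons_isPath_iff]; exact ⟨hpw, hvs pw hlw hdw⟩
  have := (hT.existsUnique_path v r).unique hp1 hp2
  have := congrArg (fun p : T.Walk v r => p.getVert 1) this
  simpa using this

lemma exists_child (hT : T.IsTree) (hn : 2 ≤ Fintype.card V)
    (hAB : isBipartition T A B) {s : V} (hnp : ¬ pendant T s) (r : V) :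
    ∃ w, T.Adj s w ∧ T.dist s r + 1 = T.dist w r := by
  -- s has a neighbor
  obtain ⟨t, ht⟩ := Fintype.exists_ne_of_one_lt_card (by omega) s
  have hd : T.dist s t ≠ 0 :=
    dist_ne_zero_iff_ne_and_reachable.mpr ⟨fun he => ht he.symm, hT.isConnected s t⟩
  obtain ⟨p, hp⟩ := exists_walk_of_dist_ne_zero hd
  have hnb : ∃ w, T.Adj s w := by
    cases p with
    | nil => simp at hd
    | cons h q => exact ⟨_, h⟩
  obtain ⟨w, hw⟩ := hnb
  unfold pendant at hnp
  rw [ExistsUnique] at hnp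
  push_neg at hnp
  obtain ⟨w', hw', hne⟩ := hnp w hw
  rcases adj_dist hT hAB hw r with h1 | h1
  · rcases adj_dist hT hAB hw' r with h2 | h2
    · exact absurd (unique_parent_s8 (r := r) hT hw hw' (by omega) (by omega)) hne.symm
    · exact ⟨w', hw', by omega⟩
  · exact ⟨w, hw, by omega⟩

lemma card_le_classA (hT : T.IsTree) (hn : 2 ≤ Fintype.card V)
    (hAB : isBipartition T A B) {S : Finset V} (hstab : stableSet T S)
    (hnp : ∀ v ∈ S, ¬ pendant T v) : S.card ≤ A.card := by
  have : Nonempty V := Fintype.card_pos_iff.mp (by omega)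
  obtain ⟨r⟩ := this
  set f : V → V := fun s =>
    if h : ∃ w, T.Adj s w ∧ T.dist s r + 1 = T.dist w r then h.choose else s with hf
  have hfspec : ∀ s ∈ S, T.Adj s (f s) ∧ T.dist s r + 1 = T.dist (f s) r := by
    intro s hs
    have h := exists_child hT hn hAB (hnp s hs) r
    simp only [hf, dif_pos h]
    exact h.choose_spec
  have hmaps : ∀ s ∈ S ∩ B, f s ∈ A \ S := by
    intro s hs
    rw [Finset.mem_inter] at hs
    obtain ⟨hadj, -⟩ := hfspec s hs.1
    rw [Finset.mem_sdiff]
    constructor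
    · rcases hAB.2.2 s (f s) hadj with ⟨h1, h2⟩ | ⟨h1, h2⟩
      · exact absurd hs.2 (Finset.disjoint_left.mp hAB.1 h1)
      · exact h2
    · intro hfs
      exact hstab s hs.1 (f s) hfs hadj
  have hinj : Set.InjOn f ((S ∩ B : Finset V) : Set V) := by
    intro s1 h1 s2 h2 he
    simp only [Finset.coe_inter, Set.mem_inter_iff, Finset.mem_coe] at h1 h2
    obtain ⟨ha1, hd1⟩ := hfspec s1 h1.1
    obtain ⟨ha2, hd2⟩ := hfspec s2 h2.1
    rw [he] at ha1 hd1
    exact unique_parent_s8 (r := r) hT ha1.symm ha2.symm (by omega) (by omega)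
  have hcard1 : (S ∩ B).card ≤ (A \ S).card :=
    Finset.card_le_card_of_injOn f hmaps hinj
  have hsplit : S.card = (S ∩ A).card + (S ∩ B).card := by
    rw [← Finset.card_union_of_disjoint]
    · congr 1
      rw [← Finset.inter_union_distrib_left, hAB.2.1, Finset.inter_univ]
    · exact Finset.disjoint_left.mpr fun x hx1 hx2 =>
        Finset.disjoint_left.mp hAB.1 (Finset.mem_inter.mp hx1).2 (Finset.mem_inter.mp hx2).2
  have hA : (S ∩ A).card + (A \ S).card ≤ A.card := by
    rw [← Finset.card_union_of_disjoint]
    · apply Finset.card_le_card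
      intro x hx
      rcases Finset.mem_union.mp hx with h | h
      · exact (Finset.mem_inter.mp h).2
      · exact (Finset.mem_sdiff.mp h).1
    · exact Finset.disjoint_left.mpr fun x hx1 hx2 =>
        (Finset.mem_sdiff.mp hx2).2 (Finset.mem_inter.mp hx1).1
  omega

lemma isBipartition_symm (hAB : isBipartition T A B) : isBipartition T B A :=
  ⟨hAB.1.symm, by rw [Finset.union_comm]; exact hAB.2.1,
    fun u v h => (hAB.2.2 u v h).symm⟩

end Aux

theorem stmt8 [Fintype V] (T : SimpleGraph V) (hT : T.IsTree)
    (hn : 2 ≤ Fintype.card V) (A B : Finset V) (hAB : isBipartition T A B)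
    (S : Finset V) (hS : maximalStableSet T S)
    (hcard : min A.card B.card < S.card) :
    ∃ v ∈ S, pendant T v := by
  by_contra h
  push_neg at h
  have h1 := card_le_classA hT hn hAB hS.1 h
  have h2 := card_le_classA hT hn (isBipartition_symm hAB) hS.1 h
  omega
end

section
/- If T is a tree with bipartition {A, B} and S is a maximal stable set of T containing no pendant vertex of T, then |S| ≤ min(|A|, |B|). -/
/-!
Root the tree at any vertex `r`. A vertex that is not pendant has degree at least two (a tree on
at least two vertices has no isolated vertex), while at most one of its neighbours is closer to
`r`; hence it has a child, i.e. a neighbour one step farther from `r`. Sending every vertex of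
`S \ A` to a child gives an injection into `A \ S`: the child lies in `A` by the bipartition, is
outside `S` by stability, and determines its parent. So `|S| ≤ |A|`, and symmetrically `|S| ≤ |B|`.
-/


open Finset SimpleGraph
open scoped Classical

variable {V : Type*}

namespace isBipartition

variable [Fintype V] {G : SimpleGraph V} {A B : Finset V}

lemma symm (hAB : isBipartition G A B) : isBipartition G B A :=
  ⟨hAB.1.symm, by rw [union_comm, hAB.2.1], fun u v h => (hAB.2.2 u v h).symm⟩

lemma mem_of_adj_of_notMem (hAB : isBipartition G A B) {v w : V} (h : G.Adj v w)
    (hv : v ∉ A) : w ∈ A := by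
  rcases hAB.2.2 v w h with ⟨hvA, -⟩ | ⟨-, hwA⟩
  · exact absurd hvA hv
  · exact hwA

end isBipartition

namespace SimpleGraph.IsTree

variable {T : SimpleGraph V}

lemma eq_of_adj_of_dist_add_one (hT : T.IsTree) (r : V) {w v₁ v₂ : V}
    (h₁ : T.Adj v₁ w) (h₂ : T.Adj v₂ w)
    (d₁ : T.dist r v₁ + 1 = T.dist r w) (d₂ : T.dist r v₂ + 1 = T.dist r w) : v₁ = v₂ := by
  obtain ⟨p₁, hp₁⟩ := hT.connected.exists_walk_length_eq_dist r v₁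
  obtain ⟨p₂, hp₂⟩ := hT.connected.exists_walk_length_eq_dist r v₂
  have hq₁ : (p₁.concat h₁).IsPath :=
    Walk.isPath_of_length_eq_dist _ (by rw [Walk.length_concat, hp₁, d₁])
  have hq₂ : (p₂.concat h₂).IsPath :=
    Walk.isPath_of_length_eq_dist _ (by rw [Walk.length_concat, hp₂, d₂])
  obtain ⟨q, -, hq⟩ := hT.existsUnique_path r w
  exact (Walk.concat_inj ((hq _ hq₁).trans (hq _ hq₂).symm)).1

lemma exists_adj_dist_add_one_of_not_pendant [Nontrivial V] (hT : T.IsTree) (r : V) {v : V}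
    (hv : ¬ pendant T v) : ∃ w, T.Adj v w ∧ T.dist r w = T.dist r v + 1 := by
  obtain ⟨x, hx⟩ := hT.connected.preconnected.exists_adj_of_nontrivial v
  obtain ⟨y, hy, hyx⟩ : ∃ y, T.Adj v y ∧ y ≠ x := by
    by_contra! h
    exact hv ⟨x, hx, h⟩
  rcases hT.dist_eq_dist_add_one_of_adj r hx with hdx | hdx
  · rcases hT.dist_eq_dist_add_one_of_adj r hy with hdy | hdy
    · exact absurd (hT.eq_of_adj_of_dist_add_one r hy.symm hx.symm hdy.symm hdx.symm) hyx
    · exact ⟨y, hy, hdy⟩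
  · exact ⟨x, hx, hdx⟩

lemma card_le_of_stableSet_of_not_pendant [Fintype V] [Nontrivial V] (hT : T.IsTree)
    {A B : Finset V} (hAB : isBipartition T A B) {S : Finset V} (hS : stableSet T S)
    (hpend : ∀ v ∈ S, ¬ pendant T v) : S.card ≤ A.card := by
  obtain ⟨r⟩ := hT.connected.nonempty
  choose! c hc_adj hc_dist using
    fun v (hv : v ∈ S) => hT.exists_adj_dist_add_one_of_not_pendant r (hpend v hv)
  have hmaps : ∀ v ∈ S \ A, c v ∈ A \ S := by
    intro v hv
    rw [mem_sdiff] at hv ⊢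
    exact ⟨hAB.mem_of_adj_of_notMem (hc_adj v hv.1) hv.2,
      fun hcS => hS v hv.1 (c v) hcS (hc_adj v hv.1)⟩
  have hinj : Set.InjOn c ↑(S \ A) := by
    intro v₁ hv₁ v₂ hv₂ heq
    have hv₁S := (mem_sdiff.mp (mem_coe.mp hv₁)).1
    have hv₂S := (mem_sdiff.mp (mem_coe.mp hv₂)).1
    exact hT.eq_of_adj_of_dist_add_one r (hc_adj v₁ hv₁S) (heq ▸ hc_adj v₂ hv₂S)
      (hc_dist v₁ hv₁S).symm (heq ▸ (hc_dist v₂ hv₂S).symm)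
  have hle := card_le_card_of_injOn c hmaps hinj
  calc S.card = (S \ A).card + (S ∩ A).card := (card_sdiff_add_card_inter S A).symm
    _ ≤ (A \ S).card + (A ∩ S).card := by rw [inter_comm]; omega
    _ = A.card := card_sdiff_add_card_inter A S

end SimpleGraph.IsTree

theorem stmt9 [Fintype V] (T : SimpleGraph V) (hT : T.IsTree)
    (hn : 2 ≤ Fintype.card V) (A B : Finset V) (hAB : isBipartition T A B)
    (S : Finset V) (hS : maximalStableSet T S)
    (hpend : ∀ v ∈ S, ¬ pendant T v) :
    S.card ≤ min A.card B.card := by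
  have : Nontrivial V := Fintype.one_lt_card_iff_nontrivial.mp hn
  exact le_min (hT.card_le_of_stableSet_of_not_pendant hAB hS.1 hpend)
    (hT.card_le_of_stableSet_of_not_pendant hAB.symm hS.1 hpend)
end

section
/- For a tree T on n ≥ 2 vertices, α(T) = n/2 if and only if core(T) = ∅, where core(T) is the intersection of all maximum stable sets of T. -/
open Finset SimpleGraph
open scoped Classical

variable {V : Type*}

section Aux

variable [Fintype V] (G : SimpleGraph V)

/-- Relative independence number on a finite vertex set `A`. -/
noncomputable def alphaOn (A : Finset V) : ℕ :=
  (A.powerset.filter (fun S => stableSet G S)).sup Finset.card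

/-- Maximum stable subset of `A`. -/
def maxOnS (A S : Finset V) : Prop :=
  S ⊆ A ∧ stableSet G S ∧ ∀ S' : Finset V, S' ⊆ A → stableSet G S' → S'.card ≤ S.card

/-- Core relative to `A`. -/
noncomputable def coreOn (A : Finset V) : Finset V :=
  A.filter (fun v => ∀ S : Finset V, maxOnS G A S → v ∈ S)

variable {G}

lemma stable_empty : stableSet G ∅ := by simp [stableSet]

lemma stable_subset {S S' : Finset V} (h : S' ⊆ S) (hS : stableSet G S) :
    stableSet G S' := fun u hu w hw => hS u (h hu) w (h hw)

lemma card_le_alphaOn {A S : Finset V} (hS : S ⊆ A) (h : stableSet G S) :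
    S.card ≤ alphaOn G A :=
  Finset.le_sup (by simp [Finset.mem_filter, Finset.mem_powerset, hS, h])

lemma exists_maxOn (A : Finset V) : ∃ S, maxOnS G A S ∧ S.card = alphaOn G A := by
  obtain ⟨S, hS, hcard⟩ := Finset.exists_mem_eq_sup
    (A.powerset.filter (fun S => stableSet G S))
    ⟨∅, by simp [Finset.mem_filter, stable_empty]⟩ Finset.card
  simp only [Finset.mem_filter, Finset.mem_powerset] at hS
  exact ⟨S, ⟨hS.1, hS.2, fun S' h1 h2 => hcard ▸ card_le_alphaOn h1 h2⟩, hcard.symm⟩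

lemma maxOn_card {A S : Finset V} (h : maxOnS G A S) : S.card = alphaOn G A := by
  obtain ⟨S0, h0, hc⟩ := exists_maxOn (G := G) A
  exact le_antisymm (card_le_alphaOn h.1 h.2.1) (hc ▸ h.2.2 S0 h0.1 h0.2.1)

lemma isolated_mem_coreOn {A : Finset V} {v : V} (hv : v ∈ A)
    (hiso : ∀ x ∈ A, ¬ G.Adj v x) : v ∈ coreOn G A := by
  simp only [coreOn, Finset.mem_filter]
  refine ⟨hv, fun S hS => ?_⟩
  by_contra hvS
  have hstable : stableSet G (insert v S) := by
    intro a ha b hb hab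
    have haA : a ∈ A := (Finset.insert_subset hv hS.1) ha
    have hbA : b ∈ A := (Finset.insert_subset hv hS.1) hb
    rcases Finset.mem_insert.1 ha with h1 | h1
    · rw [h1] at hab
      exact hiso b hbA hab
    · rcases Finset.mem_insert.1 hb with h2 | h2
      · rw [h2] at hab
        exact hiso a haA hab.symm
      · exact hS.2.1 a h1 b h2 hab
  have hle := hS.2.2 (insert v S) (Finset.insert_subset hv hS.1) hstable
  rw [Finset.card_insert_of_notMem hvS] at hle
  omega

lemma edge_head {u v x : V} {p : G.Walk u v} (hp : p.IsPath) (hx : s(u, x) ∈ p.edges) :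
    x = p.getVert 1 := by
  cases p with
  | nil => simp at hx
  | @cons _ w _ h q =>
    rw [SimpleGraph.Walk.edges_cons, List.mem_cons] at hx
    rcases hx with hx | hx
    · rw [Sym2.congr_right] at hx
      · simpa using hx
    · exfalso
      have hu : u ∈ q.support := q.fst_mem_support_of_mem_edges hx
      rw [SimpleGraph.Walk.cons_isPath_iff] at hp
      exact hp.2 hu

/-- In an acyclic graph, any nonempty finite set `A` contains a vertex with at most one
neighbor inside `A`. -/
lemma exists_leaf (hG : G.IsAcyclic) {A : Finset V} (hA : A.Nonempty) :
    ∃ v ∈ A, ∀ x ∈ A, G.Adj v x → ∀ y ∈ A, G.Adj v y → x = y := by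
  obtain ⟨a, ha⟩ := hA
  set P : ℕ → Prop := fun n => ∃ u v : V, ∃ p : G.Walk u v, p.IsPath ∧
    (∀ x ∈ p.support, x ∈ A) ∧ p.length = n with hP
  have h0 : P 0 := ⟨a, a, SimpleGraph.Walk.nil, by simp, by simpa using ha, rfl⟩
  have hbd : ∀ m, P m → m ≤ Fintype.card V := by
    rintro m ⟨u, v, p, hp, -, rfl⟩
    exact hp.length_lt.le
  set n := Nat.findGreatest P (Fintype.card V) with hn
  have hPn : P n := Nat.findGreatest_spec (Nat.zero_le _) h0
  have hmax : ∀ m, P m → m ≤ n := fun m hm => Nat.le_findGreatest (hbd m hm) hm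
  obtain ⟨u, v, p, hpath, hsupp, hlen⟩ := hPn
  refine ⟨u, hsupp u p.start_mem_support, ?_⟩
  have key : ∀ z ∈ A, G.Adj u z → z = p.getVert 1 := by
    intro z hzA hadj
    by_contra hz1
    have hnp : ¬ (SimpleGraph.Walk.cons hadj.symm p).IsPath := by
      intro hpp
      have : P (n + 1) := ⟨z, v, SimpleGraph.Walk.cons hadj.symm p, hpp, by
        intro x hx
        rw [SimpleGraph.Walk.support_cons, List.mem_cons] at hx
        rcases hx with rfl | hx
        · exact hzA
        · exact hsupp x hx, by simp [hlen]⟩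
      have := hmax _ this
      omega
    rw [SimpleGraph.Walk.cons_isPath_iff] at hnp
    push_neg at hnp
    have hzsupp : z ∈ p.support := hnp hpath
    set q := p.takeUntil z hzsupp with hq
    have hqpath : q.IsPath := hpath.takeUntil hzsupp
    have hcyc : (SimpleGraph.Walk.cons hadj.symm q).IsCycle := by
      rw [SimpleGraph.Walk.cons_isCycle_iff]
      refine ⟨hqpath, fun he => ?_⟩
      have : s(u, z) ∈ p.edges := by
        have := p.edges_takeUntil_subset hzsupp he
        rwa [Sym2.eq_swap] at this
      exact hz1 (edge_head hpath this)
    exact hG _ hcyc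
  intro x hx hax y hy hay
  rw [key x hx hax, key y hy hay]

lemma alphaOn_delete {A : Finset V} {v w : V} (hv : v ∈ A) (hw : w ∈ A)
    (hadj : G.Adj v w) (huniq : ∀ x ∈ A, G.Adj v x → x = w) :
    alphaOn G A = alphaOn G (A \ {v, w}) + 1 := by
  have hvw : v ≠ w := hadj.ne
  apply le_antisymm
  · -- any stable S ⊆ A gives stable S \ {v,w} ⊆ A \ {v,w} losing ≤ 1 element
    obtain ⟨S, hS, hcard⟩ := exists_maxOn (G := G) A
    have hsub : S \ {v, w} ⊆ A \ {v, w} := Finset.sdiff_subset_sdiff hS.1 (Finset.Subset.refl _)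
    have hstab : stableSet G (S \ {v, w}) := stable_subset Finset.sdiff_subset hS.2.1
    have hint : (S ∩ {v, w}).card ≤ 1 := by
      by_cases hvS : v ∈ S
      · have hwS : w ∉ S := fun hw' => hS.2.1 v hvS w hw' hadj
        have : S ∩ {v, w} ⊆ {v} := by
          intro x hx
          rw [Finset.mem_inter, Finset.mem_insert, Finset.mem_singleton] at hx
          rcases hx.2 with rfl | rfl
          · exact Finset.mem_singleton_self _
          · exact absurd hx.1 hwS
        simpa using Finset.card_le_card this
      · have : S ∩ {v, w} ⊆ {w} := by
          intro x hx
          rw [Finset.mem_inter, Finset.mem_insert, Finset.mem_singleton] at hx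
          rcases hx.2 with rfl | rfl
          · exact absurd hx.1 hvS
          · exact Finset.mem_singleton_self _
        simpa using Finset.card_le_card this
    have hsd : (S \ {v, w}).card + (S ∩ {v, w}).card = S.card :=
      Finset.card_sdiff_add_card_inter _ _
    have hle := card_le_alphaOn hsub hstab
    omega
  · -- extend a maximum stable set of A \ {v,w} by v
    obtain ⟨S', hS', hcard'⟩ := exists_maxOn (G := G) (A \ {v, w})
    have hvS' : v ∉ S' := fun h => by
      have := hS'.1 h
      rw [Finset.mem_sdiff] at this
      exact this.2 (by simp)
    have hnadj : ∀ s ∈ S', ¬ G.Adj v s := by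
      intro s hs hvs
      have hsA : s ∈ A \ {v, w} := hS'.1 hs
      rw [Finset.mem_sdiff] at hsA
      exact hsA.2 (by simp [huniq s hsA.1 hvs])
    have hstab : stableSet G (insert v S') := by
      intro a ha b hb hab
      rcases Finset.mem_insert.1 ha with h1 | h1
      · rcases Finset.mem_insert.1 hb with h2 | h2
        · rw [h1, h2] at hab
          exact G.irrefl hab
        · rw [h1] at hab
          exact hnadj b h2 hab
      · rcases Finset.mem_insert.1 hb with h2 | h2
        · rw [h2] at hab
          exact hnadj a h1 hab.symm
        · exact hS'.2.1 a h1 b h2 hab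
    have hsub : insert v S' ⊆ A :=
      Finset.insert_subset hv (hS'.1.trans Finset.sdiff_subset)
    have := card_le_alphaOn hsub hstab
    rw [Finset.card_insert_of_notMem hvS'] at this
    omega

lemma coreOn_delete_subset {A : Finset V} {v w : V} (hv : v ∈ A) (hw : w ∈ A)
    (hadj : G.Adj v w) (huniq : ∀ x ∈ A, G.Adj v x → x = w) :
    coreOn G (A \ {v, w}) ⊆ coreOn G A := by
  intro x hx
  simp only [coreOn, Finset.mem_filter] at hx ⊢
  obtain ⟨hxA', hxall⟩ := hx
  refine ⟨(Finset.mem_sdiff.1 hxA').1, fun S hS => ?_⟩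
  have hsub : S \ {v, w} ⊆ A \ {v, w} := Finset.sdiff_subset_sdiff hS.1 (Finset.Subset.refl _)
  have hstab : stableSet G (S \ {v, w}) := stable_subset Finset.sdiff_subset hS.2.1
  have hint : (S ∩ {v, w}).card ≤ 1 := by
    by_cases hvS : v ∈ S
    · have hwS : w ∉ S := fun hw' => hS.2.1 v hvS w hw' hadj
      have hss : S ∩ {v, w} ⊆ {v} := by
        intro y hy
        rw [Finset.mem_inter, Finset.mem_insert, Finset.mem_singleton] at hy
        rcases hy.2 with rfl | rfl
        · exact Finset.mem_singleton_self _
        · exact absurd hy.1 hwS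
      simpa using Finset.card_le_card hss
    · have hss : S ∩ {v, w} ⊆ {w} := by
        intro y hy
        rw [Finset.mem_inter, Finset.mem_insert, Finset.mem_singleton] at hy
        rcases hy.2 with rfl | rfl
        · exact absurd hy.1 hvS
        · exact Finset.mem_singleton_self _
      simpa using Finset.card_le_card hss
  have hsd : (S \ {v, w}).card + (S ∩ {v, w}).card = S.card :=
    Finset.card_sdiff_add_card_inter _ _
  have hSA : S.card = alphaOn G A := maxOn_card hS
  have hαd := alphaOn_delete hv hw hadj huniq
  have hmax' : maxOnS G (A \ {v, w}) (S \ {v, w}) := by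
    refine ⟨hsub, hstab, fun S'' h1 h2 => ?_⟩
    have := card_le_alphaOn h1 h2
    omega
  exact Finset.sdiff_subset (hxall _ hmax')

lemma coreOn_nonempty (hG : G.IsAcyclic) :
    ∀ A : Finset V, A.card < 2 * alphaOn G A → (coreOn G A).Nonempty := by
  intro A
  induction A using Finset.strongInduction with
  | _ A ih =>
    intro hlt
    rcases A.eq_empty_or_nonempty with rfl | hA
    · exfalso
      have : alphaOn G (∅ : Finset V) = 0 := by
        apply Nat.le_antisymm _ (Nat.zero_le _)
        apply Finset.sup_le
        intro S hS
        simp only [Finset.mem_filter, Finset.mem_powerset, Finset.subset_empty] at hS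
        simp [hS.1]
      omega
    by_cases hiso : ∃ v ∈ A, ∀ x ∈ A, ¬ G.Adj v x
    · obtain ⟨v, hv, hvi⟩ := hiso
      exact ⟨v, isolated_mem_coreOn hv hvi⟩
    push_neg at hiso
    obtain ⟨v, hvA, hleaf⟩ := exists_leaf hG hA
    obtain ⟨w, hwA, hadj⟩ := hiso v hvA
    have huniq : ∀ x ∈ A, G.Adj v x → x = w := fun x hx h => hleaf x hx h w hwA hadj
    have hvw : v ≠ w := hadj.ne
    have hsubvw : ({v, w} : Finset V) ⊆ A := by
      intro x hx
      rw [Finset.mem_insert, Finset.mem_singleton] at hx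
      rcases hx with rfl | rfl <;> assumption
    have hcard2 : ({v, w} : Finset V).card = 2 := Finset.card_pair hvw
    have hcardA' : (A \ {v, w}).card + 2 = A.card := by
      rw [← hcard2]
      exact Finset.card_sdiff_add_card_eq_card hsubvw
    have hα := alphaOn_delete hvA hwA hadj huniq
    have hss : A \ {v, w} ⊂ A := by
      refine Finset.ssubset_iff_of_subset Finset.sdiff_subset |>.2 ⟨v, hvA, ?_⟩
      simp
    obtain ⟨x, hx⟩ := ih (A \ {v, w}) hss (by omega)
    exact ⟨x, coreOn_delete_subset hvA hwA hadj huniq hx⟩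

lemma exists_bipartition (hG : G.IsAcyclic) :
    ∀ A : Finset V, ∃ P, P ⊆ A ∧ ∀ u ∈ A, ∀ x ∈ A, G.Adj u x → (u ∈ P ↔ x ∉ P) := by
  intro A
  induction A using Finset.strongInduction with
  | _ A ih =>
    rcases A.eq_empty_or_nonempty with rfl | hA
    · exact ⟨∅, Finset.Subset.refl _, by simp⟩
    obtain ⟨v, hvA, hleaf⟩ := exists_leaf hG hA
    obtain ⟨P', hP'sub, hP'⟩ := ih (A.erase v) (Finset.erase_ssubset hvA)
    have hvP' : v ∉ P' := fun h => (Finset.mem_erase.1 (hP'sub h)).1 rfl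
    by_cases hnb : ∃ w ∈ A, G.Adj v w
    · obtain ⟨w, hwA, hadj⟩ := hnb
      have hwv : w ≠ v := hadj.ne'
      refine ⟨if w ∈ P' then P' else insert v P', ?_, ?_⟩
      · split_ifs
        · exact hP'sub.trans (Finset.erase_subset _ _)
        · exact Finset.insert_subset hvA (hP'sub.trans (Finset.erase_subset _ _))
      · intro a ha b hb hab
        by_cases hav : a = v
        · subst hav
          have hbw : b = w := hleaf b hb hab w hwA hadj
          subst hbw
          split_ifs with hwP
          · simp [hvP', hwP]
          · simp [hwv, hwP]
        · by_cases hbv : b = v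
          · subst hbv
            have haw : a = w := hleaf a ha hab.symm w hwA hadj
            subst haw
            split_ifs with hwP
            · simp [hvP', hwP]
            · simp [hwv, hwP]
          · have ha' : a ∈ A.erase v := Finset.mem_erase.2 ⟨hav, ha⟩
            have hb' : b ∈ A.erase v := Finset.mem_erase.2 ⟨hbv, hb⟩
            have := hP' a ha' b hb' hab
            split_ifs with hwP
            · exact this
            · simp only [Finset.mem_insert, hav, hbv, false_or]
              exact this
    · push_neg at hnb
      refine ⟨P', hP'sub.trans (Finset.erase_subset _ _), ?_⟩
      intro a ha b hb hab
      have hav : a ≠ v := by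
        rintro rfl
        exact hnb b hb hab
      have hbv : b ≠ v := by
        rintro rfl
        exact hnb a ha hab.symm
      exact hP' a (Finset.mem_erase.2 ⟨hav, ha⟩) b (Finset.mem_erase.2 ⟨hbv, hb⟩) hab

lemma alphaNum_eq_alphaOn_univ : alphaNum G = alphaOn G Finset.univ := rfl

lemma maxStableSet_iff_maxOn_univ {S : Finset V} :
    maxStableSet G S ↔ maxOnS G Finset.univ S := by
  constructor
  · rintro ⟨h1, h2⟩
    exact ⟨Finset.subset_univ _, h1, fun S' _ h => h2 S' h⟩
  · rintro ⟨_, h1, h2⟩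
    exact ⟨h1, fun S' h => h2 S' (Finset.subset_univ _) h⟩

lemma coreSet_eq_coreOn_univ : coreSet G = coreOn G Finset.univ := by
  ext v
  simp only [coreSet, coreOn, Finset.mem_filter, Finset.mem_univ, true_and]
  constructor
  · exact fun h S hS => h S (maxStableSet_iff_maxOn_univ.2 hS)
  · exact fun h S hS => h S (maxStableSet_iff_maxOn_univ.1 hS)

end Aux

theorem stmt11 [Fintype V] (T : SimpleGraph V) (hT : T.IsTree)
    (hn : 2 ≤ Fintype.card V) :
    2 * alphaNum T = Fintype.card V ↔ coreSet T = ∅ := by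
  have hac : T.IsAcyclic := hT.IsAcyclic
  obtain ⟨P, hPsub, hPbip⟩ := exists_bipartition hac (Finset.univ : Finset V)
  have hPstable : stableSet T P := by
    intro u hu x hx hadj
    have := hPbip u (Finset.mem_univ u) x (Finset.mem_univ x) hadj
    tauto
  have hQstable : stableSet T (Finset.univ \ P) := by
    intro u hu x hx hadj
    have := hPbip u (Finset.mem_univ u) x (Finset.mem_univ x) hadj
    rw [Finset.mem_sdiff] at hu hx
    tauto
  have hcards : (Finset.univ \ P).card + P.card = Fintype.card V := by
    rw [Finset.card_sdiff_add_card_eq_card hPsub, Finset.card_univ]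
  have hle1 : P.card ≤ alphaNum T :=
    alphaNum_eq_alphaOn_univ (G := T) ▸ card_le_alphaOn (Finset.subset_univ _) hPstable
  have hle2 : (Finset.univ \ P).card ≤ alphaNum T :=
    alphaNum_eq_alphaOn_univ (G := T) ▸ card_le_alphaOn (Finset.subset_univ _) hQstable
  have hge : Fintype.card V ≤ 2 * alphaNum T := by omega
  constructor
  · intro h
    have hPcard : P.card = alphaNum T := by omega
    have hQcard : (Finset.univ \ P).card = alphaNum T := by omega
    have hPmax : maxStableSet T P := by
      refine ⟨hPstable, fun S' hS' => ?_⟩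
      have := alphaNum_eq_alphaOn_univ (G := T) ▸
        card_le_alphaOn (Finset.subset_univ S') hS'
      omega
    have hQmax : maxStableSet T (Finset.univ \ P) := by
      refine ⟨hQstable, fun S' hS' => ?_⟩
      have := alphaNum_eq_alphaOn_univ (G := T) ▸
        card_le_alphaOn (Finset.subset_univ S') hS'
      omega
    rw [Finset.eq_empty_iff_forall_notMem]
    intro v hv
    simp only [coreSet, Finset.mem_filter, Finset.mem_univ, true_and] at hv
    have h1 := hv P hPmax
    have h2 := hv _ hQmax
    rw [Finset.mem_sdiff] at h2
    exact h2.2 h1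
  · intro h
    have hnlt : ¬ (Finset.univ : Finset V).card < 2 * alphaOn T Finset.univ := by
      intro hlt
      obtain ⟨x, hx⟩ := coreOn_nonempty hac Finset.univ hlt
      rw [← coreSet_eq_coreOn_univ, h] at hx
      simp at hx
    rw [Finset.card_univ, ← alphaNum_eq_alphaOn_univ] at hnlt
    omega
end

section
/- A connected bipartite graph G on at least 2 vertices has a perfect matching if and only if core(G) = ∅, where core(G) is the intersection of all maximum stable sets of G. -/
open Finset SimpleGraph
open scoped Classical

variable {V : Type*}

section Aux

variable [Fintype V]

/-- Neighborhood of a set. -/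
noncomputable def NS (G : SimpleGraph V) (X : Finset V) : Finset V :=
  Finset.univ.filter (fun y => ∃ x ∈ X, G.Adj x y)

lemma mem_NS {G : SimpleGraph V} {X : Finset V} {y : V} :
    y ∈ NS G X ↔ ∃ x ∈ X, G.Adj x y := by simp [NS]

lemma NS_mono {G : SimpleGraph V} {X Y : Finset V} (h : X ⊆ Y) : NS G X ⊆ NS G Y := by
  intro y hy
  rw [mem_NS] at hy ⊢
  obtain ⟨x, hx, hadj⟩ := hy
  exact ⟨x, h hx, hadj⟩

lemma isBipartition_symm_s12 {G : SimpleGraph V} {A B : Finset V} (h : isBipartition G A B) :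
    isBipartition G B A := by
  refine ⟨h.1.symm, by rw [Finset.union_comm]; exact h.2.1, fun u v hadj => (h.2.2 u v hadj).symm⟩

lemma stable_classA {G : SimpleGraph V} {A B : Finset V} (h : isBipartition G A B) :
    stableSet G A := by
  intro u hu w hw hadj
  rcases h.2.2 u w hadj with ⟨h1, h2⟩ | ⟨h1, h2⟩
  · exact Finset.disjoint_left.mp h.1 hw h2
  · exact Finset.disjoint_left.mp h.1 hu h1

lemma NS_subset_B {G : SimpleGraph V} {A B : Finset V} (h : isBipartition G A B)
    {X : Finset V} (hX : X ⊆ A) : NS G X ⊆ B := by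
  intro y hy
  rw [mem_NS] at hy
  obtain ⟨x, hx, hadj⟩ := hy
  rcases h.2.2 x y hadj with ⟨_, h2⟩ | ⟨h1, _⟩
  · exact h2
  · exact absurd h1 (Finset.disjoint_left.mp h.1 (hX hx))

/-- Key lemma: if Hall's condition fails on side `A`, the core is nonempty. -/
lemma core_ne_of_hall_fail {G : SimpleGraph V} {A B : Finset V}
    (hAB : isBipartition G A B) {X : Finset V} (hXA : X ⊆ A)
    (hX : (NS G X).card < X.card) : coreSet G ≠ ∅ := by
  classical
  -- deficiency function
  set defi : Finset V → ℤ := fun Y => (Y.card : ℤ) - (NS G Y).card with hdefi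
  -- the maximum deficiency
  have hne : (A.powerset).Nonempty := ⟨∅, Finset.empty_mem_powerset A⟩
  obtain ⟨Xm, hXm, hXmax⟩ := Finset.exists_max_image A.powerset defi hne
  set d : ℤ := defi Xm with hd
  have hd1 : 1 ≤ d := by
    have := hXmax X (Finset.mem_powerset.mpr hXA)
    have : (NS G X).card + 1 ≤ X.card := hX
    have h2 : (1 : ℤ) ≤ defi X := by simp only [hdefi]; push_cast; omega
    linarith [hXmax X (Finset.mem_powerset.mpr hXA)]
  -- pick a minimum-cardinality maximizer
  have hQne : ((A.powerset).filter (fun Y => defi Y = d)).Nonempty :=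
    ⟨Xm, Finset.mem_filter.mpr ⟨hXm, rfl⟩⟩
  obtain ⟨X0, hX0mem, hX0min⟩ :=
    Finset.exists_min_image ((A.powerset).filter (fun Y => defi Y = d)) Finset.card hQne
  have hX0A : X0 ⊆ A := Finset.mem_powerset.mp (Finset.mem_filter.mp hX0mem).1
  have hX0d : defi X0 = d := (Finset.mem_filter.mp hX0mem).2
  have hX0ne : X0.Nonempty := by
    rw [Finset.nonempty_iff_ne_empty]
    rintro rfl
    have : NS G (∅ : Finset V) = ∅ := by
      ext y; simp [mem_NS]
    rw [hdefi] at hX0d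
    simp [this] at hX0d
    omega
  -- main claim: X0 is contained in every maximum stable set
  have key : ∀ S : Finset V, maxStableSet G S → X0 ⊆ S := by
    intro S hS
    by_contra hnotsub
    -- W = X0 \ S is nonempty
    have hWne : (X0 \ S).Nonempty := by
      rw [Finset.sdiff_nonempty]
      exact hnotsub
    set U : Finset V := S ∩ NS G X0 with hU
    set W : Finset V := X0 \ S with hW
    set X1 : Finset V := X0 ∩ S with hX1
    -- S' is stable
    set S' : Finset V := (S \ NS G X0) ∪ X0 with hS'
    have hstab : stableSet G S' := by
      intro u hu w hw hadj
      rw [hS', Finset.mem_union] at hu hw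
      rcases hu with hu | hu <;> rcases hw with hw | hw
      · exact hS.1 u (Finset.mem_sdiff.mp hu).1 w (Finset.mem_sdiff.mp hw).1 hadj
      · exact (Finset.mem_sdiff.mp hu).2 (mem_NS.mpr ⟨w, hw, hadj.symm⟩)
      · exact (Finset.mem_sdiff.mp hw).2 (mem_NS.mpr ⟨u, hu, hadj⟩)
      · exact stable_classA hAB u (hX0A hu) w (hX0A hw) hadj
    -- cardinality of S'
    have hdisj0 : Disjoint X0 (NS G X0) :=
      Finset.disjoint_of_subset_left hX0A
        (Finset.disjoint_of_subset_right (NS_subset_B hAB hX0A) hAB.1)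
    have hcardS' : S'.card + U.card = S.card + W.card := by
      have h1 : (X0 \ (S \ NS G X0)).card + (S \ NS G X0).card = S'.card := by
        rw [hS', Finset.union_comm]
        exact Finset.card_sdiff_add_card X0 (S \ NS G X0)
      have h2 : X0 \ (S \ NS G X0) = W := by
        ext x
        simp only [Finset.mem_sdiff, hW, not_and, not_not]
        constructor
        · rintro ⟨hx, h⟩
          refine ⟨hx, fun hxS => ?_⟩
          have := h hxS
          exact Finset.disjoint_left.mp hdisj0 hx this
        · rintro ⟨hx, hxS⟩
          exact ⟨hx, fun h => absurd h hxS⟩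
      have h3 : (S ∩ NS G X0).card + (S \ NS G X0).card = S.card :=
        Finset.card_inter_add_card_sdiff S (NS G X0)
      rw [h2] at h1
      rw [hU]
      omega
    have hWU : W.card ≤ U.card := by
      have := hS.2 S' hstab
      omega
    -- U is disjoint from NS G X1
    have hUd : Disjoint U (NS G X1) := by
      rw [Finset.disjoint_left]
      intro u hu hu'
      rw [mem_NS] at hu'
      obtain ⟨x, hx, hadj⟩ := hu'
      rw [hX1, Finset.mem_inter] at hx
      exact hS.1 x hx.2 u (Finset.mem_inter.mp hu).1 hadj
    have hNX1U : (NS G X1).card + U.card ≤ (NS G X0).card := by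
      have hsub : NS G X1 ∪ U ⊆ NS G X0 := by
        apply Finset.union_subset
        · exact NS_mono (Finset.inter_subset_left)
        · rw [hU]; exact Finset.inter_subset_right
      calc (NS G X1).card + U.card = (NS G X1 ∪ U).card := by
            rw [Finset.card_union_of_disjoint hUd.symm]
        _ ≤ (NS G X0).card := Finset.card_le_card hsub
    -- X1 is a proper subset of X0, so its deficiency is smaller
    have hX1ss : X1 ⊂ X0 := by
      constructor
      · rw [hX1]; exact Finset.inter_subset_left
      · intro h
        obtain ⟨x, hx⟩ := hWne
        rw [hW, Finset.mem_sdiff] at hx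
        have := h hx.1
        rw [hX1, Finset.mem_inter] at this
        exact hx.2 this.2
    have hX1d : defi X1 ≤ d - 1 := by
      have hle : defi X1 ≤ d :=
        hXmax X1 (Finset.mem_powerset.mpr (hX1ss.1.trans hX0A))
      by_contra h
      have heq : defi X1 = d := by omega
      have := hX0min X1 (Finset.mem_filter.mpr
        ⟨Finset.mem_powerset.mpr (hX1ss.1.trans hX0A), heq⟩)
      have := Finset.card_lt_card hX1ss
      omega
    -- the cardinality identity X0 = X1 ∪ W
    have hsplit : X1.card + W.card = X0.card := by
      rw [hX1, hW, Finset.inter_comm]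
      have := Finset.card_inter_add_card_sdiff X0 S
      rw [Finset.inter_comm] at this
      omega
    -- final arithmetic contradiction
    have : (U.card : ℤ) + 1 ≤ W.card := by
      have e0 : d = (X0.card : ℤ) - (NS G X0).card := by rw [← hX0d, hdefi]
      have e1 : (X0.card : ℤ) = X1.card + W.card := by exact_mod_cast hsplit.symm
      have e2 : ((NS G X1).card : ℤ) + U.card ≤ (NS G X0).card := by exact_mod_cast hNX1U
      have e3 : (X1.card : ℤ) - (NS G X1).card ≤ d - 1 := hX1d
      linarith
    have : U.card + 1 ≤ W.card := by exact_mod_cast this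
    omega
  -- conclude
  obtain ⟨v, hv⟩ := hX0ne
  intro hcore
  have : v ∈ coreSet G := by
    rw [coreSet, Finset.mem_filter]
    exact ⟨Finset.mem_univ v, fun S hS => key S hS hv⟩
  rw [hcore] at this
  exact absurd this (Finset.notMem_empty v)

/-- Existence of a bipartition from 2-colorability. -/
lemma fin_two_cases (x : Fin 2) : x = 0 ∨ x = 1 := by
  fin_cases x <;> simp

lemma exists_bipartition_s12 {G : SimpleGraph V} (h : G.Colorable 2) :
    ∃ A B : Finset V, isBipartition G A B := by
  obtain ⟨C⟩ := h
  refine ⟨Finset.univ.filter (fun v => C v = 0), Finset.univ.filter (fun v => C v = 1),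
    ?_, ?_, ?_⟩
  · rw [Finset.disjoint_left]
    intro a ha hb
    rw [Finset.mem_filter] at ha hb
    rw [ha.2] at hb
    exact absurd hb.2 (by decide)
  · ext v
    simp only [Finset.mem_union, Finset.mem_filter, Finset.mem_univ, true_and, true_iff]
    simp only [iff_true]
    exact fin_two_cases (C v)
  · intro u v hadj
    have hne : C u ≠ C v := C.valid hadj
    simp only [Finset.mem_filter, Finset.mem_univ, true_and]
    rcases fin_two_cases (C u) with h1 | h1 <;> rcases fin_two_cases (C v) with h2 | h2
    · exact absurd (h1.trans h2.symm) hne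
    · exact Or.inl ⟨h1, h2⟩
    · exact Or.inr ⟨h1, h2⟩
    · exact absurd (h1.trans h2.symm) hne

/-- Easy direction: a perfect matching forces the core to be empty. -/
lemma core_empty_of_pm {G : SimpleGraph V} {A B : Finset V} (hAB : isBipartition G A B)
    {M : G.Subgraph} (hM : M.IsPerfectMatching) : coreSet G = ∅ := by
  classical
  -- the matching partner function
  have hEx : ∀ v : V, ∃! w, M.Adj v w := fun v => hM.1 (hM.2 v)
  set p : V → V := fun v => (hEx v).choose with hp
  have hpadj : ∀ v, M.Adj v (p v) := fun v => (hEx v).choose_spec.1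
  have hpinj : Function.Injective p := by
    intro u v huv
    have h1 : M.Adj (p u) u := (M.adj_symm (hpadj u))
    have h2 : M.Adj (p u) v := by rw [huv]; exact (M.adj_symm (hpadj v))
    exact ((hEx (p u)).unique h1 h2)
  have hpG : ∀ v, G.Adj v (p v) := fun v => M.adj_sub (hpadj v)
  -- any stable set has size at most half the vertices
  have hhalf : ∀ S : Finset V, stableSet G S → 2 * S.card ≤ Fintype.card V := by
    intro S hstab
    have hdisj : Disjoint S (S.image p) := by
      rw [Finset.disjoint_right]
      intro w hw hwS
      rw [Finset.mem_image] at hw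
      obtain ⟨u, hu, rfl⟩ := hw
      exact hstab u hu (p u) hwS (hpG u)
    calc 2 * S.card = S.card + (S.image p).card := by
          rw [Finset.card_image_of_injective S hpinj]; ring
      _ = (S ∪ S.image p).card := (Finset.card_union_of_disjoint hdisj).symm
      _ ≤ Fintype.card V := by
          rw [← Finset.card_univ]
          exact Finset.card_le_card (Finset.subset_univ _)
  -- p maps each class into the other
  have himg : ∀ {C D : Finset V}, isBipartition G C D → C.image p ⊆ D := by
    intro C D hCD
    intro w hw
    rw [Finset.mem_image] at hw
    obtain ⟨u, hu, rfl⟩ := hw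
    rcases hCD.2.2 u (p u) (hpG u) with ⟨_, h2⟩ | ⟨h1, _⟩
    · exact h2
    · exact absurd h1 (Finset.disjoint_left.mp hCD.1 hu)
  have hcAB : A.card = B.card := by
    have h1 : A.card ≤ B.card := by
      rw [← Finset.card_image_of_injective A hpinj]
      exact Finset.card_le_card (himg hAB)
    have h2 : B.card ≤ A.card := by
      rw [← Finset.card_image_of_injective B hpinj]
      exact Finset.card_le_card (himg (isBipartition_symm_s12 hAB))
    omega
  have hsplit : A.card + B.card = Fintype.card V := by
    rw [← Finset.card_union_of_disjoint hAB.1, hAB.2.1, Finset.card_univ]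
  -- A and B are maximum stable sets
  have hmaxA : maxStableSet G A :=
    ⟨stable_classA hAB, fun S' hS' => by have := hhalf S' hS'; omega⟩
  have hmaxB : maxStableSet G B :=
    ⟨stable_classA (isBipartition_symm_s12 hAB), fun S' hS' => by have := hhalf S' hS'; omega⟩
  rw [Finset.eq_empty_iff_forall_notMem]
  intro v hv
  rw [coreSet, Finset.mem_filter] at hv
  exact Finset.disjoint_left.mp hAB.1 (hv.2 A hmaxA) (hv.2 B hmaxB)

/-- Hall's theorem packaged for our neighborhood function. -/
lemma exists_injective_adj {G : SimpleGraph V} {A : Finset V}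
    (hall : ∀ X ⊆ A, X.card ≤ (NS G X).card) :
    ∃ f : ↥A → V, Function.Injective f ∧ ∀ a : ↥A, G.Adj ↑a (f a) := by
  classical
  have key : ∀ s : Finset ↥A,
      s.card ≤ (s.biUnion (fun a => Finset.univ.filter (fun y => G.Adj ↑a y))).card := by
    intro s
    have h1 : (s.image ((↑) : ↥A → V)) ⊆ A := by
      intro x hx
      rw [Finset.mem_image] at hx
      obtain ⟨a, _, rfl⟩ := hx
      exact a.2
    have h2 : s.biUnion (fun a => Finset.univ.filter (fun y => G.Adj ↑a y))
        = NS G (s.image ((↑) : ↥A → V)) := by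
      ext y
      simp only [Finset.mem_biUnion, mem_NS, Finset.mem_image, Finset.mem_filter,
        Finset.mem_univ, true_and]
      constructor
      · rintro ⟨a, ha, hadj⟩
        exact ⟨↑a, ⟨a, ha, rfl⟩, hadj⟩
      · rintro ⟨x, ⟨a, ha, rfl⟩, hadj⟩
        exact ⟨a, ha, hadj⟩
    rw [h2, ← Finset.card_image_of_injective s Subtype.coe_injective]
    exact hall _ h1
  obtain ⟨f, hinj, hf⟩ := (Finset.all_card_le_biUnion_card_iff_exists_injective
    (fun a : ↥A => Finset.univ.filter (fun y => G.Adj ↑a y))).mp key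
  exact ⟨f, hinj, fun a : ↥A => (Finset.mem_filter.mp (hf a)).2⟩

end Aux

theorem stmt12 [Fintype V] (G : SimpleGraph V) (hconn : G.Connected)
    (hbip : G.Colorable 2) (hn : 2 ≤ Fintype.card V) :
    (∃ M : G.Subgraph, M.IsPerfectMatching) ↔ coreSet G = ∅ := by
  classical
  obtain ⟨A, B, hAB⟩ := exists_bipartition_s12 hbip
  constructor
  · rintro ⟨M, hM⟩
    exact core_empty_of_pm hAB hM
  · intro hcore
    have hallA : ∀ X ⊆ A, X.card ≤ (NS G X).card := by
      intro X hX
      by_contra h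
      exact (core_ne_of_hall_fail hAB hX (by omega)) hcore
    have hallB : ∀ X ⊆ B, X.card ≤ (NS G X).card := by
      intro X hX
      by_contra h
      exact (core_ne_of_hall_fail (isBipartition_symm_s12 hAB) hX (by omega)) hcore
    obtain ⟨f, hfinj, hfadj⟩ := exists_injective_adj hallA
    obtain ⟨g, hginj, hgadj⟩ := exists_injective_adj hallB
    have hmem : ∀ {C D : Finset V}, isBipartition G C D →
        ∀ (h : ↥C → V), (∀ c : ↥C, G.Adj ↑c (h c)) → ∀ c : ↥C, h c ∈ D := by
      intro C D hCD h hadj c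
      rcases hCD.2.2 ↑c (h c) (hadj c) with ⟨_, h2⟩ | ⟨h1, _⟩
      · exact h2
      · exact absurd h1 (Finset.disjoint_left.mp hCD.1 c.2)
    set F : ↥A → ↥B := fun a => ⟨f a, hmem hAB f hfadj a⟩ with hF
    set Gf : ↥B → ↥A := fun b => ⟨g b, hmem (isBipartition_symm_s12 hAB) g hgadj b⟩ with hGf
    have hFinj : Function.Injective F := by
      intro a b hab
      exact hfinj (congrArg Subtype.val hab)
    have hGinj : Function.Injective Gf := by
      intro a b hab
      exact hginj (congrArg Subtype.val hab)
    have hcard : Fintype.card ↥A = Fintype.card ↥B :=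
      le_antisymm (Fintype.card_le_of_injective F hFinj)
        (Fintype.card_le_of_injective Gf hGinj)
    have hFbij : Function.Bijective F :=
      (Fintype.bijective_iff_injective_and_card F).mpr ⟨hFinj, hcard⟩
    refine ⟨{ verts := Set.univ
              Adj := fun u v => ∃ a : ↥A, (u = ↑a ∧ v = ↑(F a)) ∨ (v = ↑a ∧ u = ↑(F a))
              adj_sub := ?_
              edge_vert := fun _ => Set.mem_univ _
              symm := ?_ }, ?_, fun v => Set.mem_univ v⟩
    · rintro u v ⟨a, ⟨rfl, rfl⟩ | ⟨rfl, rfl⟩⟩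
      · exact hfadj a
      · exact (hfadj a).symm
    · constructor; rintro u v ⟨a, h | h⟩
      · exact ⟨a, Or.inr h⟩
      · exact ⟨a, Or.inl h⟩
    · intro v _
      have hv : v ∈ A ∪ B := by rw [hAB.2.1]; exact Finset.mem_univ v
      rw [Finset.mem_union] at hv
      rcases hv with hvA | hvB
      · have hvB : v ∉ B := Finset.disjoint_left.mp hAB.1 hvA
        refine ⟨↑(F ⟨v, hvA⟩), ⟨⟨v, hvA⟩, Or.inl ⟨rfl, rfl⟩⟩, ?_⟩
        rintro w ⟨a, ⟨h1, h2⟩ | ⟨h1, h2⟩⟩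
        · have ha : a = ⟨v, hvA⟩ := Subtype.ext h1.symm
          rw [h2, ha]
        · exact absurd (h2 ▸ (F a).2) hvB
      · have hvA : v ∉ A := Finset.disjoint_left.mp hAB.1.symm hvB
        obtain ⟨a, ha⟩ := hFbij.2 ⟨v, hvB⟩
        refine ⟨↑a, ⟨a, Or.inr ⟨rfl, by rw [ha]⟩⟩, ?_⟩
        rintro w ⟨a', ⟨h1, h2⟩ | ⟨h1, h2⟩⟩
        · exact absurd (h1 ▸ a'.2) hvA
        · have : F a' = F a := by
            rw [ha]
            exact Subtype.ext h2.symm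
          rw [h1, hFinj this]
end

section
/- A connected bipartite graph G on at least 2 vertices has a perfect matching if and only if G possesses two maximum stable sets that partition its vertex set. -/
open Finset SimpleGraph
open scoped Classical

variable {V : Type*}

theorem stmt13 [Fintype V] (G : SimpleGraph V) (hconn : G.Connected)
    (hbip : G.Colorable 2) (hn : 2 ≤ Fintype.card V) :
    (∃ M : G.Subgraph, M.IsPerfectMatching) ↔
    (∃ S₁ S₂ : Finset V, maxStableSet G S₁ ∧ maxStableSet G S₂ ∧
      Disjoint S₁ S₂ ∧ S₁ ∪ S₂ = Finset.univ) := by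
  constructor
  · rintro ⟨M, hM⟩
    -- build the matching involution φ
    have hex : ∀ v : V, ∃! w, M.Adj v w := fun v => hM.1 (hM.2 v)
    set φ : V → V := fun v => (hex v).choose with hφdef
    have hφadj : ∀ v, M.Adj v (φ v) := fun v => (hex v).choose_spec.1
    have hφuniq : ∀ v w, M.Adj v w → w = φ v := fun v w h => (hex v).choose_spec.2 w h
    have hφφ : ∀ v, φ (φ v) = v := fun v => (hφuniq (φ v) v (hφadj v).symm).symm
    have hφinj : Function.Injective φ := fun a b h => by
      have := congrArg φ h; rwa [hφφ, hφφ] at this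
    have hφG : ∀ v, G.Adj v (φ v) := fun v => M.adj_sub (hφadj v)
    -- any stable set has card ≤ n/2
    have hhalf : ∀ S : Finset V, stableSet G S → 2 * S.card ≤ Fintype.card V := by
      intro S hS
      have hsub : S.image φ ⊆ Sᶜ := by
        intro y hy
        rcases Finset.mem_image.mp hy with ⟨x, hx, rfl⟩
        simp only [Finset.mem_compl]
        intro hφx
        exact hS x hx (φ x) hφx (hφG x)
      have h1 : S.card ≤ Sᶜ.card := by
        calc S.card = (S.image φ).card := (Finset.card_image_of_injective S hφinj).symm
        _ ≤ Sᶜ.card := Finset.card_le_card hsub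
      have h2 : Sᶜ.card = Fintype.card V - S.card := Finset.card_compl S
      have h3 : S.card ≤ Fintype.card V := Finset.card_le_univ S
      omega
    -- the bipartition classes
    obtain ⟨C⟩ := hbip
    set A : Finset V := Finset.univ.filter (fun v => C v = 0) with hA
    set B : Finset V := Finset.univ.filter (fun v => C v ≠ 0) with hB
    have hfin2 : ∀ i : Fin 2, i = 0 ∨ i = 1 := by decide
    have hAst : stableSet G A := by
      intro u hu w hw hadj
      have hu' : C u = 0 := (Finset.mem_filter.mp hu).2
      have hw' : C w = 0 := (Finset.mem_filter.mp hw).2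
      exact C.valid hadj (hu'.trans hw'.symm)
    have hBst : stableSet G B := by
      intro u hu w hw hadj
      have hu' : C u ≠ 0 := (Finset.mem_filter.mp hu).2
      have hw' : C w ≠ 0 := (Finset.mem_filter.mp hw).2
      have hu1 : C u = 1 := (hfin2 (C u)).resolve_left hu'
      have hw1 : C w = 1 := (hfin2 (C w)).resolve_left hw'
      exact C.valid hadj (hu1.trans hw1.symm)
    have hdisj : Disjoint A B := by
      rw [Finset.disjoint_left]
      intro a ha hb
      exact (Finset.mem_filter.mp hb).2 (Finset.mem_filter.mp ha).2
    have hunion : A ∪ B = Finset.univ := by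
      ext v
      simp only [Finset.mem_union, hA, hB, Finset.mem_filter, Finset.mem_univ, true_and,
        iff_true]
      exact (em _)
    have hsum : A.card + B.card = Fintype.card V := by
      rw [← Finset.card_union_of_disjoint hdisj, hunion, Finset.card_univ]
    have hA2 := hhalf A hAst
    have hB2 := hhalf B hBst
    have hAB : A.card = B.card := by omega
    refine ⟨A, B, ⟨hAst, ?_⟩, ⟨hBst, ?_⟩, hdisj, hunion⟩
    · intro S' hS'; have := hhalf S' hS'; omega
    · intro S' hS'; have := hhalf S' hS'; omega
  · rintro ⟨S₁, S₂, hS₁, hS₂, hdisj, hunion⟩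
    have hcards : S₁.card = S₂.card := le_antisymm (hS₂.2 S₁ hS₁.1) (hS₁.2 S₂ hS₂.1)
    have hmem : ∀ v : V, v ∈ S₁ ∨ v ∈ S₂ := by
      intro v
      have : v ∈ S₁ ∪ S₂ := hunion ▸ Finset.mem_univ v
      exact Finset.mem_union.mp this
    -- neighborhood function into S₂
    set t : {x // x ∈ S₁} → Finset V := fun x => S₂.filter (fun y => G.Adj ↑x y) with ht
    have hall : ∀ s : Finset {x // x ∈ S₁}, s.card ≤ (s.biUnion t).card := by
      intro s
      by_contra hlt
      push_neg at hlt
      set N := s.biUnion t with hN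
      set W := s.image (fun x : {x // x ∈ S₁} => (x : V)) with hW
      have hWcard : W.card = s.card := Finset.card_image_of_injective s Subtype.val_injective
      have hWS₁ : W ⊆ S₁ := by
        intro y hy
        rcases Finset.mem_image.mp hy with ⟨x, _, rfl⟩
        exact x.2
      have hNS₂ : N ⊆ S₂ := by
        intro y hy
        rcases Finset.mem_biUnion.mp hy with ⟨x, _, hyx⟩
        exact (Finset.mem_filter.mp hyx).1
      set T := (S₂ \ N) ∪ W with hT
      have hTst : stableSet G T := by
        intro u hu w hw hadj
        rcases Finset.mem_union.mp hu with hu' | hu' <;>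
          rcases Finset.mem_union.mp hw with hw' | hw'
        · exact hS₂.1 u (Finset.mem_sdiff.mp hu').1 w (Finset.mem_sdiff.mp hw').1 hadj
        · -- u ∈ S₂ \ N, w ∈ W
          rcases Finset.mem_image.mp hw' with ⟨x, hx, rfl⟩
          have : u ∈ N := Finset.mem_biUnion.mpr
            ⟨x, hx, Finset.mem_filter.mpr ⟨(Finset.mem_sdiff.mp hu').1, hadj.symm⟩⟩
          exact (Finset.mem_sdiff.mp hu').2 this
        · rcases Finset.mem_image.mp hu' with ⟨x, hx, rfl⟩
          have : w ∈ N := Finset.mem_biUnion.mpr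
            ⟨x, hx, Finset.mem_filter.mpr ⟨(Finset.mem_sdiff.mp hw').1, hadj⟩⟩
          exact (Finset.mem_sdiff.mp hw').2 this
        · exact hS₁.1 u (hWS₁ hu') w (hWS₁ hw') hadj
      have hTdisj : Disjoint (S₂ \ N) W := by
        refine Finset.disjoint_left.mpr (fun a ha haW => ?_)
        exact (Finset.disjoint_left.mp hdisj) (hWS₁ haW) (Finset.mem_sdiff.mp ha).1
      have hTcard : T.card = S₂.card - N.card + s.card := by
        rw [hT, Finset.card_union_of_disjoint hTdisj, Finset.card_sdiff_of_subset hNS₂, hWcard]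
      have hle := hS₂.2 T hTst
      have hNle : N.card ≤ S₂.card := Finset.card_le_card hNS₂
      omega
    obtain ⟨f, hfinj, hft⟩ := (Finset.all_card_le_biUnion_card_iff_exists_injective t).mp hall
    have hfS₂ : ∀ x, f x ∈ S₂ := fun x => (Finset.mem_filter.mp (hft x)).1
    have hfadj : ∀ x : {x // x ∈ S₁}, G.Adj ↑x (f x) := fun x => (Finset.mem_filter.mp (hft x)).2
    -- f is onto S₂
    have hsurj : ∀ y ∈ S₂, ∃ x, f x = y := by
      intro y hy
      set I := (Finset.univ : Finset {x // x ∈ S₁}).image f with hI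
      have hIS₂ : I ⊆ S₂ := by
        intro z hz
        rcases Finset.mem_image.mp hz with ⟨x, _, rfl⟩
        exact hfS₂ x
      have hIcard : I.card = S₂.card := by
        rw [hI, Finset.card_image_of_injective _ hfinj, Finset.card_univ,
          Fintype.card_coe, hcards]
      have : I = S₂ := Finset.eq_of_subset_of_card_le hIS₂ (le_of_eq hIcard.symm)
      have hyI : y ∈ I := this ▸ hy
      rcases Finset.mem_image.mp hyI with ⟨x, _, hx⟩
      exact ⟨x, hx⟩
    -- build the matching
    refine ⟨⟨Set.univ,
      fun u v => (∃ x : {x // x ∈ S₁}, u = ↑x ∧ v = f x) ∨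
        (∃ x : {x // x ∈ S₁}, v = ↑x ∧ u = f x), ?_, ?_, ?_⟩, ?_⟩
    · rintro u v (⟨x, rfl, rfl⟩ | ⟨x, rfl, rfl⟩)
      · exact hfadj x
      · exact (hfadj x).symm
    · intro u v _; trivial
    · refine ⟨?_⟩; rintro u v (⟨x, h1, h2⟩ | ⟨x, h1, h2⟩)
      · exact Or.inr ⟨x, h1, h2⟩
      · exact Or.inl ⟨x, h1, h2⟩
    · rw [SimpleGraph.Subgraph.isPerfectMatching_iff]
      intro v
      rcases hmem v with hv | hv
      · refine ⟨f ⟨v, hv⟩, Or.inl ⟨⟨v, hv⟩, rfl, rfl⟩, ?_⟩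
        rintro w (⟨x, hvx, rfl⟩ | ⟨x, rfl, hvf⟩)
        · obtain rfl : x = ⟨v, hv⟩ := Subtype.ext hvx.symm
          rfl
        · exact absurd (by rw [hvf]; exact hfS₂ x : v ∈ S₂) (Finset.disjoint_left.mp hdisj hv)
      · obtain ⟨x₀, hx₀⟩ := hsurj v hv
        refine ⟨↑x₀, Or.inr ⟨x₀, rfl, hx₀.symm⟩, ?_⟩
        rintro w (⟨x, rfl, rfl⟩ | ⟨x, rfl, hvf⟩)
        · exact absurd hv (Finset.disjoint_left.mp hdisj x.2)
        · exact congrArg Subtype.val (hfinj (hvf.symm.trans hx₀.symm))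
end

section
/- Let T₁, T₂ be trees and T the tree obtained by identifying a vertex v₁ of T₁ with a vertex v₂ of T₂ into a single vertex v (vertex bonding). If v ∈ core(T), then α(T) = α(T₁) + α(T₂) − 1. -/
open Finset SimpleGraph
open scoped Classical

variable {V : Type*}

/-- Stable sets of the subtree induced on a vertex set `A`. -/
def stableIn (G : SimpleGraph V) (A S : Finset V) : Prop :=
  S ⊆ A ∧ stableSet G S

/-- Maximum stable sets of the subtree induced on `A`. -/
def maxStableIn [Fintype V] (G : SimpleGraph V) (A S : Finset V) : Prop :=
  stableIn G A S ∧ ∀ S' : Finset V, stableIn G A S' → S'.card ≤ S.card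

/-- The independence number of the subtree induced on `A`. -/
noncomputable def alphaIn [Fintype V] (G : SimpleGraph V) (A : Finset V) : ℕ :=
  (A.powerset.filter (fun S => stableSet G S)).sup Finset.card

/-- The core of the subtree induced on `A`. -/
noncomputable def coreIn [Fintype V] (G : SimpleGraph V) (A : Finset V) : Finset V :=
  A.filter (fun x => ∀ S : Finset V, maxStableIn G A S → x ∈ S)

/-- `T` is the vertex bonding `T₁ * v * T₂` of the trees `T₁` and `T₂`, induced
on the vertex sets `A` and `B` respectively, identified at the vertex `v`. -/
def isBonding [Fintype V] (T : SimpleGraph V) (v : V) (A B : Finset V) : Prop :=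
  T.IsTree ∧ (T.induce (A : Set V)).IsTree ∧ (T.induce (B : Set V)).IsTree ∧
  A ∩ B = {v} ∧ A ∪ B = Finset.univ ∧
  ∀ x y : V, T.Adj x y → (x ∈ A ∧ y ∈ A) ∨ (x ∈ B ∧ y ∈ B)

lemma stable_le_alphaIn [Fintype V] (T : SimpleGraph V) {A S : Finset V} (hS : S ⊆ A)
    (h : stableSet T S) : S.card ≤ alphaIn T A :=
  Finset.le_sup (by simp [Finset.mem_filter, Finset.mem_powerset, hS, h])

lemma stable_le_alphaNum [Fintype V] (T : SimpleGraph V) {S : Finset V}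
    (h : stableSet T S) : S.card ≤ alphaNum T :=
  Finset.le_sup (by simp [Finset.mem_filter, Finset.mem_powerset, h])

lemma exists_alphaIn [Fintype V] (T : SimpleGraph V) (A : Finset V) :
    ∃ S, S ⊆ A ∧ stableSet T S ∧ S.card = alphaIn T A := by
  have hne : (A.powerset.filter (fun S => stableSet T S)).Nonempty :=
    ⟨∅, Finset.mem_filter.2 ⟨Finset.empty_mem_powerset _, by simp [stableSet]⟩⟩
  obtain ⟨S, hS, hcard⟩ := Finset.exists_mem_eq_sup _ hne Finset.card
  simp only [Finset.mem_filter, Finset.mem_powerset] at hS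
  exact ⟨S, hS.1, hS.2, hcard.symm⟩

lemma exists_maxStable [Fintype V] (T : SimpleGraph V) :
    ∃ S, maxStableSet T S ∧ S.card = alphaNum T := by
  have hne : ((Finset.univ : Finset V).powerset.filter (fun S => stableSet T S)).Nonempty :=
    ⟨∅, by simp [stableSet]⟩
  obtain ⟨S, hS, hcard⟩ := Finset.exists_mem_eq_sup _ hne Finset.card
  simp only [Finset.mem_filter, Finset.mem_powerset] at hS
  refine ⟨S, ⟨hS.2, fun S' hS' => ?_⟩, hcard.symm⟩
  rw [← hcard]
  exact stable_le_alphaNum T hS'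

lemma union_stable {A B : Finset V} (T : SimpleGraph V)
    (hE : ∀ x y : V, T.Adj x y → (x ∈ A ∧ y ∈ A) ∨ (x ∈ B ∧ y ∈ B))
    {SA SB : Finset V}
    (h1 : ∀ x ∈ SA, x ∈ B → x ∈ SB) (h2 : ∀ x ∈ SB, x ∈ A → x ∈ SA)
    (hsA : stableSet T SA) (hsB : stableSet T SB) : stableSet T (SA ∪ SB) := by
  intro u hu w hw hadj
  simp only [Finset.mem_union] at hu hw
  rcases hE u w hadj with ⟨huA, hwA⟩ | ⟨huB, hwB⟩
  · have hu' : u ∈ SA := hu.elim id (fun h => h2 u h huA)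
    have hw' : w ∈ SA := hw.elim id (fun h => h2 w h hwA)
    exact hsA u hu' w hw' hadj
  · have hu' : u ∈ SB := hu.elim (fun h => h1 u h huB) id
    have hw' : w ∈ SB := hw.elim (fun h => h1 w h hwB) id
    exact hsB u hu' w hw' hadj

theorem stmt14 [Fintype V] (T : SimpleGraph V) (v : V) (A B : Finset V)
    (hbond : isBonding T v A B) (hv : v ∈ coreSet T) :
    alphaNum T + 1 = alphaIn T A + alphaIn T B := by
  obtain ⟨-, -, -, hAB, hU, hE⟩ := hbond
  obtain ⟨S, hSmax, hScard⟩ := exists_maxStable T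
  have hvS : v ∈ S := by
    simp only [coreSet, Finset.mem_filter] at hv
    exact hv.2 S hSmax
  apply le_antisymm
  · -- alphaNum T + 1 ≤ alphaIn T A + alphaIn T B
    have hA : (S ∩ A).card ≤ alphaIn T A :=
      stable_le_alphaIn T Finset.inter_subset_right
        (fun u hu w hw => hSmax.1 u (Finset.mem_inter.1 hu).1 w (Finset.mem_inter.1 hw).1)
    have hB : (S ∩ B).card ≤ alphaIn T B :=
      stable_le_alphaIn T Finset.inter_subset_right
        (fun u hu w hw => hSmax.1 u (Finset.mem_inter.1 hu).1 w (Finset.mem_inter.1 hw).1)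
    have hu : (S ∩ A) ∪ (S ∩ B) = S := by
      rw [← Finset.inter_union_distrib_left, hU, Finset.inter_univ]
    have hi : (S ∩ A) ∩ (S ∩ B) = {v} := by
      rw [Finset.inter_inter_inter_comm, Finset.inter_self, hAB]
      apply Finset.Subset.antisymm Finset.inter_subset_right
      intro x hx
      rw [Finset.mem_singleton] at hx
      subst hx
      exact Finset.mem_inter.2 ⟨hvS, Finset.mem_singleton_self _⟩
    have hcards : (S ∩ A).card + (S ∩ B).card = S.card + 1 := by
      have := Finset.card_union_add_card_inter (S ∩ A) (S ∩ B)
      rw [hu, hi, Finset.card_singleton] at this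
      omega
    omega
  · -- alphaIn T A + alphaIn T B ≤ alphaNum T + 1
    obtain ⟨SA, hSAsub, hSAst, hSAcard⟩ := exists_alphaIn T A
    obtain ⟨SB, hSBsub, hSBst, hSBcard⟩ := exists_alphaIn T B
    have hmemA : ∀ x ∈ SA, x ∈ B → x = v := fun x hx hxB => by
      have : x ∈ A ∩ B := Finset.mem_inter.2 ⟨hSAsub hx, hxB⟩
      rwa [hAB, Finset.mem_singleton] at this
    have hmemB : ∀ x ∈ SB, x ∈ A → x = v := fun x hx hxA => by
      have : x ∈ A ∩ B := Finset.mem_inter.2 ⟨hxA, hSBsub hx⟩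
      rwa [hAB, Finset.mem_singleton] at this
    by_cases hvA : v ∈ SA
    · by_cases hvB : v ∈ SB
      · -- v in both: use SA ∪ SB
        have hst : stableSet T (SA ∪ SB) :=
          union_stable T hE (fun x hx hxB => (hmemA x hx hxB) ▸ hvB)
            (fun x hx hxA => (hmemB x hx hxA) ▸ hvA) hSAst hSBst
        have hle := stable_le_alphaNum T hst
        have hi : SA ∩ SB = {v} := by
          apply Finset.Subset.antisymm
          · intro x hx
            rw [Finset.mem_singleton]
            exact hmemA x (Finset.mem_inter.1 hx).1 (hSBsub (Finset.mem_inter.1 hx).2)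
          · intro x hx
            rw [Finset.mem_singleton] at hx
            subst hx
            exact Finset.mem_inter.2 ⟨hvA, hvB⟩
        have := Finset.card_union_add_card_inter SA SB
        rw [hi, Finset.card_singleton] at this
        omega
      · -- v ∈ SA, v ∉ SB: use (SA \ {v}) ∪ SB
        have hst : stableSet T ((SA \ {v}) ∪ SB) := by
          apply union_stable T hE
          · intro x hx hxB
            rw [Finset.mem_sdiff, Finset.mem_singleton] at hx
            exact absurd (hmemA x hx.1 hxB) hx.2
          · intro x hx hxA
            exact absurd ((hmemB x hx hxA) ▸ hx) hvB
          · exact fun u hu w hw => hSAst u (Finset.mem_sdiff.1 hu).1 w (Finset.mem_sdiff.1 hw).1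
          · exact hSBst
        have hle := stable_le_alphaNum T hst
        have hdisj : Disjoint (SA \ {v}) SB := by
          rw [Finset.disjoint_left]
          intro x hx hxB
          rw [Finset.mem_sdiff, Finset.mem_singleton] at hx
          exact hx.2 (hmemA x hx.1 (hSBsub hxB))
        have hcardU := Finset.card_union_of_disjoint hdisj
        have hcardsd : (SA \ {v}).card + 1 = SA.card := by
          rw [Finset.card_sdiff_of_subset (Finset.singleton_subset_iff.2 hvA), Finset.card_singleton]
          have : 1 ≤ SA.card := Finset.card_pos.2 ⟨v, hvA⟩
          omega
        omega
    · -- v ∉ SA: use SA ∪ (SB \ {v})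
      have hst : stableSet T (SA ∪ (SB \ {v})) := by
        apply union_stable T hE
        · intro x hx hxB
          exact absurd ((hmemA x hx hxB) ▸ hx) hvA
        · intro x hx hxA
          rw [Finset.mem_sdiff, Finset.mem_singleton] at hx
          exact absurd (hmemB x hx.1 hxA) hx.2
        · exact hSAst
        · exact fun u hu w hw => hSBst u (Finset.mem_sdiff.1 hu).1 w (Finset.mem_sdiff.1 hw).1
      have hle := stable_le_alphaNum T hst
      have hdisj : Disjoint SA (SB \ {v}) := by
        rw [Finset.disjoint_left]
        intro x hx hxB
        rw [Finset.mem_sdiff, Finset.mem_singleton] at hxB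
        exact hxB.2 (hmemA x hx (hSBsub hxB.1))
      have hcardU := Finset.card_union_of_disjoint hdisj
      have hcardsd : SB.card ≤ (SB \ {v}).card + 1 := by
        have h1 : SB ⊆ (SB \ {v}) ∪ {v} := by
          intro x hx
          rw [Finset.mem_union, Finset.mem_sdiff, Finset.mem_singleton]
          by_cases hxv : x = v
          · exact Or.inr hxv
          · exact Or.inl ⟨hx, hxv⟩
        calc SB.card ≤ ((SB \ {v}) ∪ {v}).card := Finset.card_le_card h1
          _ ≤ (SB \ {v}).card + 1 := by
            have := Finset.card_union_le (SB \ {v}) ({v} : Finset V)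
            simpa using this
      omega
end

section
/- Let T be a tree on n vertices with α(T) > n/2 and let k ≥ 2. If there exists a vertex v ∈ core(T) of degree at least 2k, then |core(T) ∩ pend(T)| ≥ 2k. -/
open Finset SimpleGraph
open scoped Classical

variable {V : Type*}

set_option linter.unusedSectionVars false

section PathMachinery

variable {T : SimpleGraph V}

noncomputable def pth (hT : T.IsTree) (v x : V) : T.Walk v x :=
  (hT.existsUnique_path v x).exists.choose

lemma pth_isPath (hT : T.IsTree) (v x : V) : (pth hT v x).IsPath :=
  (hT.existsUnique_path v x).exists.choose_spec

lemma pth_eq (hT : T.IsTree) {v x : V} (w : T.Walk v x) (hw : w.IsPath) :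
    w = pth hT v x :=
  (hT.existsUnique_path v x).unique hw (pth_isPath hT v x)

lemma pth_self (hT : T.IsTree) (v : V) : pth hT v v = SimpleGraph.Walk.nil :=
  (pth_eq hT _ (SimpleGraph.Walk.IsPath.nil)).symm

lemma support_pth_self (hT : T.IsTree) (v : V) : (pth hT v v).support = [v] := by
  rw [pth_self]; rfl

lemma pth_concat (hT : T.IsTree) {v x y : V} (h : T.Adj x y)
    (hy : y ∉ (pth hT v x).support) :
    pth hT v y = (pth hT v x).concat h := by
  refine (pth_eq hT _ ?_).symm
  rw [SimpleGraph.Walk.isPath_def, SimpleGraph.Walk.support_concat]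
  simp only [List.concat_eq_append, List.nodup_append, List.nodup_cons, List.nodup_nil]
  refine ⟨(pth_isPath hT v x).2, ?_, ?_⟩
  · simp
  · intro a ha b hb heq
    simp only [List.mem_singleton] at hb
    subst hb
    subst heq
    exact hy ha
lemma exists_parent (hT : T.IsTree) {v x : V} (hx : x ≠ v) :
    ∃ b, ∃ h : T.Adj b x, x ∉ (pth hT v b).support ∧
      pth hT v x = (pth hT v b).concat h := by
  cases hp : pth hT v x with
  | nil => exact absurd rfl hx.symm
  | @cons _ a _ h q =>
    obtain ⟨b, r, h', hcons⟩ := SimpleGraph.Walk.exists_cons_eq_concat h q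
    have hpath : (r.concat h').IsPath := by
      rw [← hcons, ← hp]; exact pth_isPath hT v x
    have hrpath : r.IsPath := by
      rw [SimpleGraph.Walk.concat_eq_append] at hpath
      exact hpath.of_append_left
    have hxr : x ∉ r.support := by
      have hnd := hpath.2
      rw [SimpleGraph.Walk.support_concat,
        List.nodup_append] at hnd
      intro hmem
      exact hnd.2.2 x hmem x (List.mem_singleton_self x) rfl
    have hr : r = pth hT v b := pth_eq hT r hrpath
    subst hr
    exact ⟨b, h', hxr, hcons⟩
noncomputable def par (hT : T.IsTree) (v x : V) : V :=
  if h : x = v then v else (exists_parent hT h).choose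

lemma par_spec (hT : T.IsTree) {v x : V} (hx : x ≠ v) :
    ∃ h : T.Adj (par hT v x) x, x ∉ (pth hT v (par hT v x)).support ∧
      pth hT v x = (pth hT v (par hT v x)).concat h := by
  rw [par, dif_neg hx]
  exact (exists_parent hT hx).choose_spec

lemma par_adj (hT : T.IsTree) {v x : V} (hx : x ≠ v) : T.Adj (par hT v x) x :=
  (par_spec hT hx).choose

lemma par_not_mem (hT : T.IsTree) {v x : V} (hx : x ≠ v) :
    x ∉ (pth hT v (par hT v x)).support :=
  (par_spec hT hx).choose_spec.1

lemma pth_par (hT : T.IsTree) {v x : V} (hx : x ≠ v) :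
    pth hT v x = (pth hT v (par hT v x)).concat (par_adj hT hx) :=
  (par_spec hT hx).choose_spec.2

lemma support_par (hT : T.IsTree) {v x : V} (hx : x ≠ v) :
    (pth hT v x).support = (pth hT v (par hT v x)).support ++ [x] := by
  conv_lhs => rw [pth_par hT hx]
  rw [SimpleGraph.Walk.support_concat]

lemma length_par (hT : T.IsTree) {v x : V} (hx : x ≠ v) :
    (pth hT v x).length = (pth hT v (par hT v x)).length + 1 := by
  conv_lhs => rw [pth_par hT hx]
  exact SimpleGraph.Walk.length_concat _ _

lemma par_uniq (hT : T.IsTree) {v b x : V} (hx : x ≠ v) (h : T.Adj b x)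
    (hb : x ∉ (pth hT v b).support) : b = par hT v x := by
  have h1 : pth hT v x = (pth hT v b).concat h := pth_concat hT h hb
  have h2 := support_par hT hx
  rw [h1, SimpleGraph.Walk.support_concat] at h2
  have h3 : (pth hT v b).support = (pth hT v (par hT v x)).support :=
    List.append_cancel_right h2  -- name?
  have h4 := SimpleGraph.Walk.getLast_support (pth hT v b)
  have h5 := SimpleGraph.Walk.getLast_support (pth hT v (par hT v x))
  rw [← h4, ← h5]
  congr 1

lemma mem_support_v (hT : T.IsTree) (v x : V) : v ∈ (pth hT v x).support :=
  SimpleGraph.Walk.start_mem_support _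

lemma pth_ne_v_of_len (hT : T.IsTree) {v x : V} (hx : x ≠ v) :
    0 < (pth hT v x).length := by
  rcases Nat.eq_zero_or_pos (pth hT v x).length with h | h
  · exact absurd (SimpleGraph.Walk.eq_of_length_eq_zero h).symm hx
  · exact h

lemma adj_par_dichot (hT : T.IsTree) {v x y : V} (h : T.Adj x y) :
    (x ≠ v ∧ y = par hT v x) ∨ (y ≠ v ∧ x = par hT v y) := by
  by_cases h1 : x ∈ (pth hT v y).support
  · by_cases h2 : y ∈ (pth hT v x).support
    · exfalso
      -- both on each other's paths: derive x = y
      have e1 : pth hT v x = (pth hT v y).takeUntil x h1 :=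
        (pth_eq hT _ ((pth_isPath hT v y).takeUntil h1)).symm
      have e2 : pth hT v y = (pth hT v x).takeUntil y h2 :=
        (pth_eq hT _ ((pth_isPath hT v x).takeUntil h2)).symm
      have l1 : (pth hT v x).length ≤ (pth hT v y).length := by
        rw [e1]; exact SimpleGraph.Walk.length_takeUntil_le _ h1
      have l2 : (pth hT v y).length ≤ (pth hT v x).length := by
        rw [e2]; exact SimpleGraph.Walk.length_takeUntil_le _ h2
      have hspec := (pth hT v y).take_spec h1
      have hlen := congrArg SimpleGraph.Walk.length hspec
      rw [SimpleGraph.Walk.length_append, ← e1] at hlen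
      have hdrop : ((pth hT v y).dropUntil x h1).length = 0 := by omega
      exact h.ne (SimpleGraph.Walk.eq_of_length_eq_zero hdrop)
    · right
      have hyv : y ≠ v := fun he => h2 (by rw [he]; exact mem_support_v hT v x)
      exact ⟨hyv, par_uniq hT hyv h h2⟩
  · left
    have hxv : x ≠ v := fun he => h1 (by rw [he]; exact mem_support_v hT v y)
    exact ⟨hxv, par_uniq hT hxv h.symm h1⟩
end PathMachinery

section Stable

variable [Fintype V] {T : SimpleGraph V}

def mstab (T : SimpleGraph V) (W S : Finset V) : Prop :=
  S ⊆ W ∧ stableSet T S ∧ ∀ S' : Finset V, S' ⊆ W → stableSet T S' → S'.card ≤ S.card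

lemma stableSet_empty : stableSet T ∅ := fun u hu => absurd hu (Finset.notMem_empty u)

lemma mstab_exists (W : Finset V) : ∃ S, mstab T W S := by
  obtain ⟨S, hS, hmax⟩ := Finset.exists_max_image
    (W.powerset.filter (fun S => stableSet T S)) Finset.card
    ⟨∅, by simp [stableSet_empty]⟩
  simp only [Finset.mem_filter, Finset.mem_powerset] at hS
  refine ⟨S, hS.1, hS.2, fun S' hS'W hS' => hmax S' ?_⟩
  simp only [Finset.mem_filter, Finset.mem_powerset]
  exact ⟨hS'W, hS'⟩

lemma mstab_card_eq {W S1 S2 : Finset V} (h1 : mstab T W S1) (h2 : mstab T W S2) :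
    S1.card = S2.card :=
  le_antisymm (h2.2.2 _ h1.1 h1.2.1) (h1.2.2 _ h2.1 h2.2.1)

lemma stableSet_subset {S S' : Finset V} (h : S' ⊆ S) (hS : stableSet T S) :
    stableSet T S' := fun a ha b hb => hS a (h ha) b (h hb)

lemma two_nbrs {W S : Finset V} (hS : mstab T W S) {x : V} (hxW : x ∈ W)
    (hxA : ∀ S', mstab T W S' → x ∉ S') :
    ∃ y1 ∈ S, ∃ y2 ∈ S, y1 ≠ y2 ∧ T.Adj x y1 ∧ T.Adj x y2 := by
  classical
  set N := S.filter (fun y => T.Adj x y) with hN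
  have hxS : x ∉ S := hxA S hS
  by_cases h2 : 1 < N.card
  · obtain ⟨y1, hy1, y2, hy2, hne⟩ := Finset.one_lt_card.mp h2
    rw [hN, Finset.mem_filter] at hy1 hy2
    exact ⟨y1, hy1.1, y2, hy2.1, hne, hy1.2, hy2.2⟩
  · exfalso
    by_cases h0 : N = ∅
    · -- insert x S is stable and bigger
      have hstab : stableSet T (insert x S) := by
        intro a ha b hb
        rcases Finset.mem_insert.mp ha with rfl | haS <;>
          rcases Finset.mem_insert.mp hb with rfl | hbS
        · exact T.loopless.irrefl _
        · intro hadj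
          have : b ∈ N := Finset.mem_filter.mpr ⟨hbS, hadj⟩
          simp [h0] at this
        · intro hadj
          have : a ∈ N := Finset.mem_filter.mpr ⟨haS, hadj.symm⟩
          simp [h0] at this
        · exact hS.2.1 a haS b hbS
      have hle := hS.2.2 (insert x S) (Finset.insert_subset hxW hS.1) hstab
      rw [Finset.card_insert_of_notMem hxS] at hle
      omega
    · -- N has exactly one element y
      have h1 : N.card = 1 := by
        have : 0 < N.card := Finset.card_pos.mpr (Finset.nonempty_iff_ne_empty.mpr h0)
        omega
      obtain ⟨y, hy⟩ := Finset.card_eq_one.mp h1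
      have hyN : y ∈ N := by rw [hy]; exact Finset.mem_singleton_self y
      rw [hN, Finset.mem_filter] at hyN
      have hadjy : T.Adj x y := hyN.2
      have hyS : y ∈ S := hyN.1
      set S' := insert x (S.erase y) with hS'def
      have hxe : x ∉ S.erase y := fun h => hxS (Finset.mem_of_mem_erase h)
      have hstab : stableSet T S' := by
        intro a ha b hb
        rcases Finset.mem_insert.mp ha with rfl | haS <;>
          rcases Finset.mem_insert.mp hb with rfl | hbS
        · exact T.loopless.irrefl _
        · intro hadj
          have hbN : b ∈ N := Finset.mem_filter.mpr ⟨Finset.mem_of_mem_erase hbS, hadj⟩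
          rw [hy, Finset.mem_singleton] at hbN
          exact (Finset.ne_of_mem_erase hbS) hbN
        · intro hadj
          have haN : a ∈ N := Finset.mem_filter.mpr ⟨Finset.mem_of_mem_erase haS, hadj.symm⟩
          rw [hy, Finset.mem_singleton] at haN
          exact (Finset.ne_of_mem_erase haS) haN
        · exact hS.2.1 a (Finset.mem_of_mem_erase haS) b (Finset.mem_of_mem_erase hbS)
      have hsub : S' ⊆ W :=
        Finset.insert_subset hxW ((Finset.erase_subset y S).trans hS.1)
      have hcard : S'.card = S.card := by
        rw [hS'def, Finset.card_insert_of_notMem hxe, Finset.card_erase_of_mem hyS]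
        have : 0 < S.card := Finset.card_pos.mpr ⟨y, hyS⟩
        omega
      have hmax : mstab T W S' :=
        ⟨hsub, hstab, fun S'' hS''W hS'' => hcard ▸ hS.2.2 S'' hS''W hS''⟩
      exact hxA S' hmax (Finset.mem_insert_self x _)
end Stable

section Main

variable [Fintype V] {T : SimpleGraph V}

set_option maxHeartbeats 1000000 in
lemma main_branch (hT : T.IsTree) (v : V) :
    ∀ n (W : Finset V) (u : V), W.card ≤ n → v ∈ W →
      (∀ x ∈ W, x ≠ v → par hT v x ∈ W) → u ∈ W → T.Adj v u →
      (∀ S, mstab T W S → v ∈ S) →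
      ∃ p, p ∈ W ∧ p ≠ v ∧ (∀ S, mstab T W S → p ∈ S) ∧
        (∀ y ∈ W, T.Adj p y → y = par hT v p) ∧ par hT v p ∈ W ∧
        u ∈ (pth hT v p).support := by
  intro n
  induction n with
  | zero =>
    intro W u hcard hvW _ _ _ _
    have hW : W = ∅ := Finset.card_eq_zero.mp (Nat.le_zero.mp hcard)
    exact absurd hvW (by simp [hW])
  | succ n ih =>
    intro W u hcard hvW hpcl huW hadj hvcore
    have huv : u ≠ v := hadj.ne'
    set B := W.filter (fun x => u ∈ (pth hT v x).support) with hB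
    have hBmem : ∀ x, x ∈ B ↔ x ∈ W ∧ u ∈ (pth hT v x).support := by
      intro x; rw [hB, Finset.mem_filter]
    have huB : u ∈ B := (hBmem u).mpr ⟨huW, SimpleGraph.Walk.end_mem_support _⟩
    obtain ⟨p, hpB, hpmax⟩ :=
      Finset.exists_max_image B (fun x => (pth hT v x).length) ⟨u, huB⟩
    obtain ⟨hpW, hpu⟩ := (hBmem p).mp hpB
    have hpv : p ≠ v := by
      intro he
      rw [he, support_pth_self] at hpu
      exact huv (List.mem_singleton.mp hpu)
    have pend_of_max : ∀ x, x ∈ W → u ∈ (pth hT v x).support → x ≠ v →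
        (∀ z ∈ B, (pth hT v z).length ≤ (pth hT v x).length) →
        ∀ y ∈ W, T.Adj x y → y = par hT v x := by
      intro x hxW hxu hxv hxmax y hyW hadjxy
      rcases adj_par_dichot hT hadjxy with ⟨_, h⟩ | ⟨hyv, h⟩
      · exact h
      · exfalso
        have hsupy : (pth hT v y).support = (pth hT v x).support ++ [y] := by
          have h2 := support_par hT hyv
          rw [← h] at h2
          exact h2
        have hyB : y ∈ B :=
          (hBmem y).mpr ⟨hyW, by rw [hsupy]; exact List.mem_append_left _ hxu⟩
        have hleny : (pth hT v y).length = (pth hT v x).length + 1 := by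
          have h2 := length_par hT hyv
          rw [← h] at h2
          exact h2
        have := hxmax y hyB
        omega
    have hpmax' : ∀ z ∈ B, (pth hT v z).length ≤ (pth hT v p).length := hpmax
    have hp_nbrs := pend_of_max p hpW hpu hpv hpmax'
    have huA : ∀ S, mstab T W S → u ∉ S := by
      intro S hS huS
      exact hS.2.1 v (hvcore S hS) u huS hadj
    by_cases hpu' : p = u
    · exfalso
      obtain ⟨S0, hS0⟩ := mstab_exists (T := T) W
      obtain ⟨y1, hy1, y2, hy2, hne, ha1, ha2⟩ := two_nbrs hS0 huW huA
      have e1 : y1 = par hT v p := hp_nbrs y1 (hS0.1 hy1) (by rw [hpu']; exact ha1)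
      have e2 : y2 = par hT v p := hp_nbrs y2 (hS0.1 hy2) (by rw [hpu']; exact ha2)
      exact hne (e1.trans e2.symm)
    · have hq_adj : T.Adj (par hT v p) p := par_adj hT hpv
      set q := par hT v p with hqdef
      have hpnq : p ≠ q := hq_adj.ne'
      have hqW : q ∈ W := hpcl p hpW hpv
      have hqsup : (pth hT v p).support = (pth hT v q).support ++ [p] :=
        support_par hT hpv
      have hqu : u ∈ (pth hT v q).support := by
        rw [hqsup] at hpu
        rcases List.mem_append.mp hpu with h | h
        · exact h
        · exact absurd (List.mem_singleton.mp h).symm hpu'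
      have hqv : q ≠ v := by
        intro he
        rw [he, support_pth_self] at hqu
        exact huv (List.mem_singleton.mp hqu)
      have hlenp : (pth hT v p).length = (pth hT v q).length + 1 :=
        length_par hT hpv
      have hchild : ∀ y, y ∈ W → y ≠ v → par hT v y = q →
          (∀ w' ∈ W, T.Adj y w' → w' = q) ∧ u ∈ (pth hT v y).support := by
        intro y hyW hyv hyq
        have hsupy : (pth hT v y).support = (pth hT v q).support ++ [y] := by
          have h2 := support_par hT hyv; rw [hyq] at h2; exact h2
        have hyu : u ∈ (pth hT v y).support := by
          rw [hsupy]; exact List.mem_append_left _ hqu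
        have hleny : (pth hT v y).length = (pth hT v q).length + 1 := by
          have h2 := length_par hT hyv; rw [hyq] at h2; exact h2
        have hymax : ∀ z ∈ B, (pth hT v z).length ≤ (pth hT v y).length := by
          intro z hz; have := hpmax' z hz; omega
        have h3 := pend_of_max y hyW hyu hyv hymax
        exact ⟨fun w' hw' ha => (h3 w' hw' ha).trans hyq, hyu⟩
      by_cases hqS : ∃ S0, mstab T W S0 ∧ q ∈ S0
      · -- q in some maximum stable set: recurse on W' = W \ {p, q}
        obtain ⟨S0, hS0, hqS0⟩ := hqS
        have hque : q ≠ u := fun he => huA S0 hS0 (he ▸ hqS0)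
        have hpS0 : p ∉ S0 := fun hp0 => hS0.2.1 q hqS0 p hp0 hq_adj
        have hConly : ∀ y, y ∈ W → y ≠ v → par hT v y = q → y = p := by
          intro y hyW hyv hyq
          by_contra hyp
          obtain ⟨hynbrs, hyu⟩ := hchild y hyW hyv hyq
          have hyadj : T.Adj q y := by
            have := par_adj hT hyv; rw [hyq] at this; exact this
          have hyS0 : y ∉ S0 := fun h0 => hS0.2.1 q hqS0 y h0 hyadj
          have hynq : y ≠ q := hyadj.ne'
          set S1 := insert y (insert p (S0.erase q)) with hS1
          have hstab1 : stableSet T S1 := by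
            have hyna : ∀ b ∈ insert p (S0.erase q), ¬ T.Adj y b := by
              intro b hb hadj'
              rcases Finset.mem_insert.mp hb with rfl | hb'
              · exact hpnq ((hynbrs b hpW hadj').symm ▸ rfl)
              · exact (Finset.ne_of_mem_erase hb')
                  (hynbrs b (hS0.1 (Finset.mem_of_mem_erase hb')) hadj')
            have hpna : ∀ b ∈ S0.erase q, ¬ T.Adj p b := by
              intro b hb hadj'
              exact (Finset.ne_of_mem_erase hb)
                (hp_nbrs b (hS0.1 (Finset.mem_of_mem_erase hb)) hadj')
            intro a ha b hb
            rcases Finset.mem_insert.mp ha with rfl | ha' <;>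
              rcases Finset.mem_insert.mp hb with rfl | hb'
            · exact T.loopless.irrefl _
            · exact hyna b hb'
            · exact fun hadj' => hyna a ha' hadj'.symm
            · rcases Finset.mem_insert.mp ha' with rfl | ha'' <;>
                rcases Finset.mem_insert.mp hb' with rfl | hb''
              · exact T.loopless.irrefl _
              · exact hpna b hb''
              · exact fun hadj' => hpna a ha'' hadj'.symm
              · exact hS0.2.1 a (Finset.mem_of_mem_erase ha'') b (Finset.mem_of_mem_erase hb'')
          have hy1 : y ∉ insert p (S0.erase q) := by
            intro hmem
            rcases Finset.mem_insert.mp hmem with rfl | h'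
            · exact hyp rfl
            · exact hyS0 (Finset.mem_of_mem_erase h')
          have hp1 : p ∉ S0.erase q := fun h => hpS0 (Finset.mem_of_mem_erase h)
          have hsub1 : S1 ⊆ W := by
            intro x hx
            rcases Finset.mem_insert.mp hx with rfl | hx'
            · exact hyW
            · rcases Finset.mem_insert.mp hx' with rfl | hx''
              · exact hpW
              · exact hS0.1 (Finset.mem_of_mem_erase hx'')
          have hcard1 : S1.card = S0.card + 1 := by
            rw [hS1, Finset.card_insert_of_notMem hy1, Finset.card_insert_of_notMem hp1,
              Finset.card_erase_of_mem hqS0]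
            have : 0 < S0.card := Finset.card_pos.mpr ⟨q, hqS0⟩
            omega
          have hle := hS0.2.2 S1 hsub1 hstab1
          omega
        set W' := (W.erase p).erase q with hW'
        have hmemW' : ∀ x, x ∈ W' ↔ x ∈ W ∧ x ≠ p ∧ x ≠ q := by
          intro x
          rw [hW', Finset.mem_erase, Finset.mem_erase]
          tauto
        have hW'sub : W' ⊆ W := fun x hx => ((hmemW' x).mp hx).1
        have hvW' : v ∈ W' :=
          (hmemW' v).mpr ⟨hvW, fun h => hpv h.symm, fun h => hqv h.symm⟩
        have hpcl' : ∀ x ∈ W', x ≠ v → par hT v x ∈ W' := by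
          intro x hx hxv
          obtain ⟨hxW, hxp, hxq⟩ := (hmemW' x).mp hx
          refine (hmemW' _).mpr ⟨hpcl x hxW hxv, ?_, ?_⟩
          · intro he
            have hadjpx : T.Adj p x := by
              have := par_adj hT hxv; rw [he] at this; exact this
            exact hxq (hp_nbrs x hxW hadjpx)
          · intro he
            exact hxp (hConly x hxW hxv he)
        have huW' : u ∈ W' :=
          (hmemW' u).mpr ⟨huW, fun h => hpu' h.symm, fun h => hque h.symm⟩
        have herase_sub : ∀ S'' : Finset V, S'' ⊆ W → (S''.erase p).erase q ⊆ W' := by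
          intro S'' hS''W x hx
          have hxq := Finset.ne_of_mem_erase hx
          have hx' := Finset.mem_of_mem_erase hx
          have hxp := Finset.ne_of_mem_erase hx'
          exact (hmemW' x).mpr ⟨hS''W (Finset.mem_of_mem_erase hx'), hxp, hxq⟩
        have herase_card : ∀ S'' : Finset V, stableSet T S'' →
            S''.card ≤ ((S''.erase p).erase q).card + 1 := by
          intro S'' hS''
          have hnotboth : ¬ (p ∈ S'' ∧ q ∈ S'') :=
            fun ⟨h1, h2⟩ => hS'' q h2 p h1 hq_adj
          by_cases h1 : p ∈ S''
          · have h2 : q ∉ S'' := fun h => hnotboth ⟨h1, h⟩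
            have h2' : q ∉ S''.erase p := fun h => h2 (Finset.mem_of_mem_erase h)
            rw [Finset.erase_eq_of_notMem h2', Finset.card_erase_of_mem h1]
            have : 0 < S''.card := Finset.card_pos.mpr ⟨p, h1⟩
            omega
          · rw [Finset.erase_eq_of_notMem h1]
            by_cases h2 : q ∈ S''
            · rw [Finset.card_erase_of_mem h2]
              have : 0 < S''.card := Finset.card_pos.mpr ⟨q, h2⟩
              omega
            · rw [Finset.erase_eq_of_notMem h2]
              omega
        have hT1 : ∀ S', mstab T W' S' → mstab T W (insert p S') := by
          intro S' hS'
          have hpS' : p ∉ S' := fun h => ((hmemW' p).mp (hS'.1 h)).2.1 rfl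
          have hstab : stableSet T (insert p S') := by
            intro a ha b hb
            rcases Finset.mem_insert.mp ha with rfl | haS <;>
              rcases Finset.mem_insert.mp hb with rfl | hbS
            · exact T.loopless.irrefl _
            · intro hadj'
              exact ((hmemW' b).mp (hS'.1 hbS)).2.2
                (hp_nbrs b (hW'sub (hS'.1 hbS)) hadj')
            · intro hadj'
              exact ((hmemW' a).mp (hS'.1 haS)).2.2
                (hp_nbrs a (hW'sub (hS'.1 haS)) hadj'.symm)
            · exact hS'.2.1 a haS b hbS
          refine ⟨Finset.insert_subset hpW (hS'.1.trans hW'sub), hstab, ?_⟩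
          intro S'' hS''W hS''
          have hle2 := hS'.2.2 _ (herase_sub S'' hS''W)
            (stableSet_subset ((Finset.erase_subset _ _).trans (Finset.erase_subset _ _)) hS'')
          have := herase_card S'' hS''
          rw [Finset.card_insert_of_notMem hpS']
          omega
        obtain ⟨S'0, hS'0⟩ := mstab_exists (T := T) W'
        have hpS'0 : p ∉ S'0 := fun h => ((hmemW' p).mp (hS'0.1 h)).2.1 rfl
        have hcard_rel : ∀ S, mstab T W S → S.card = S'0.card + 1 := by
          intro S hS
          have h3 := mstab_card_eq hS (hT1 S'0 hS'0)
          rw [Finset.card_insert_of_notMem hpS'0] at h3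
          exact h3
        have hvcore' : ∀ S', mstab T W' S' → v ∈ S' := by
          intro S' hS'
          have hv' := hvcore _ (hT1 S' hS')
          rcases Finset.mem_insert.mp hv' with he | h
          · exact absurd he.symm hpv
          · exact h
        have hW'card : W'.card ≤ n := by
          have h1 : q ∈ W.erase p := Finset.mem_erase.mpr ⟨fun h => hpnq h.symm, hqW⟩
          rw [hW', Finset.card_erase_of_mem h1, Finset.card_erase_of_mem hpW]
          omega
        obtain ⟨p', hp'W', hp'v, hp'core', hp'nbrs', _, hp'u⟩ :=
          ih W' u hW'card hvW' hpcl' huW' hadj hvcore'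
        have hp'W : p' ∈ W := hW'sub hp'W'
        have hp'core : ∀ S, mstab T W S → p' ∈ S := by
          intro S hS
          have hnotboth : ¬ (p ∈ S ∧ q ∈ S) :=
            fun ⟨h1, h2⟩ => hS.2.1 q h2 p h1 hq_adj
          have hone : p ∈ S ∨ q ∈ S := by
            by_contra hno
            push_neg at hno
            have hsubS : S ⊆ W' := fun x hx =>
              (hmemW' x).mpr ⟨hS.1 hx, fun he => hno.1 (he ▸ hx), fun he => hno.2 (he ▸ hx)⟩
            have h4 := hS'0.2.2 S hsubS hS.2.1
            have h5 := hcard_rel S hS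
            omega
          have hc := hcard_rel S hS
          have hcard2 : ((S.erase p).erase q).card = S'0.card := by
            rcases hone with h1 | h1
            · have h2 : q ∉ S := fun h => hnotboth ⟨h1, h⟩
              have h2' : q ∉ S.erase p := fun h => h2 (Finset.mem_of_mem_erase h)
              rw [Finset.erase_eq_of_notMem h2', Finset.card_erase_of_mem h1]
              omega
            · by_cases h2 : p ∈ S
              · exact absurd ⟨h2, h1⟩ hnotboth
              · rw [Finset.erase_eq_of_notMem h2, Finset.card_erase_of_mem h1]
                omega
          have hm2 : mstab T W' ((S.erase p).erase q) := by
            refine ⟨herase_sub S hS.1,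
              stableSet_subset ((Finset.erase_subset _ _).trans (Finset.erase_subset _ _)) hS.2.1,
              ?_⟩
            intro S3 h3W h3
            rw [hcard2]
            exact hS'0.2.2 S3 h3W h3
          exact Finset.mem_of_mem_erase (Finset.mem_of_mem_erase (hp'core' _ hm2))
        have hp'nbrs : ∀ y ∈ W, T.Adj p' y → y = par hT v p' := by
          intro y hyW hady
          by_cases hy : y ∈ W'
          · exact hp'nbrs' y hy hady
          · exfalso
            have hyp_or : y = p ∨ y = q := by
              by_contra hc; push_neg at hc
              exact hy ((hmemW' y).mpr ⟨hyW, hc.1, hc.2⟩)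
            rcases hyp_or with rfl | rfl
            · exact ((hmemW' p').mp hp'W').2.2 (hp_nbrs p' hp'W hady.symm)
            · exact hS0.2.1 p' (hp'core S0 hS0) _ hqS0 hady
        exact ⟨p', hp'W, hp'v, hp'core, hp'nbrs, hpcl p' hp'W hp'v, hp'u⟩
      · -- q in no maximum stable set: p itself works
        push_neg at hqS
        refine ⟨p, hpW, hpv, ?_, hp_nbrs, hqW, hpu⟩
        intro S hS
        by_contra hpS
        have hstab : stableSet T (insert p S) := by
          intro a ha b hb
          rcases Finset.mem_insert.mp ha with rfl | haS <;>
            rcases Finset.mem_insert.mp hb with rfl | hbS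
          · exact T.loopless.irrefl _
          · intro hadj'
            exact hqS S hS ((hp_nbrs b (hS.1 hbS) hadj') ▸ hbS)
          · intro hadj'
            exact hqS S hS ((hp_nbrs a (hS.1 haS) hadj'.symm) ▸ haS)
          · exact hS.2.1 a haS b hbS
        have hle := hS.2.2 (insert p S) (Finset.insert_subset hpW hS.1) hstab
        rw [Finset.card_insert_of_notMem hpS] at hle
        omega

end Main
section Final

variable [Fintype V] {T : SimpleGraph V}

lemma branch_inj (hT : T.IsTree) (v : V) :
    ∀ n (p : V), (pth hT v p).length ≤ n → ∀ u1 u2, T.Adj v u1 → T.Adj v u2 →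
      u1 ∈ (pth hT v p).support → u2 ∈ (pth hT v p).support → u1 = u2 := by
  intro n
  induction n with
  | zero =>
    intro p hlen u1 u2 h1 h2 hm1 hm2
    have hvp : v = p := SimpleGraph.Walk.eq_of_length_eq_zero (Nat.le_zero.mp hlen)
    rw [← hvp, support_pth_self] at hm1
    exact absurd (List.mem_singleton.mp hm1) h1.ne'
  | succ n ih =>
    intro p hlen u1 u2 h1 h2 hm1 hm2
    by_cases hpv : p = v
    · rw [hpv, support_pth_self] at hm1
      exact absurd (List.mem_singleton.mp hm1) h1.ne'
    · have hsup := support_par hT hpv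
      have hlenp := length_par hT hpv
      by_cases hp1 : u1 = p
      · have hparv : par hT v p = v :=
          (par_uniq hT hpv (hp1 ▸ h1) (by rw [support_pth_self]; simp [hpv])).symm
        rw [hsup] at hm2
        rcases List.mem_append.mp hm2 with h | h
        · rw [hparv, support_pth_self] at h
          exact absurd (List.mem_singleton.mp h) h2.ne'
        · exact hp1.trans (List.mem_singleton.mp h).symm
      · by_cases hp2 : u2 = p
        · have hparv : par hT v p = v :=
            (par_uniq hT hpv (hp2 ▸ h2) (by rw [support_pth_self]; simp [hpv])).symm
          rw [hsup] at hm1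
          rcases List.mem_append.mp hm1 with h | h
          · rw [hparv, support_pth_self] at h
            exact absurd (List.mem_singleton.mp h) h1.ne'
          · exact absurd (List.mem_singleton.mp h) hp1
        · rw [hsup] at hm1 hm2
          have hm1' : u1 ∈ (pth hT v (par hT v p)).support := by
            rcases List.mem_append.mp hm1 with h | h
            · exact h
            · exact absurd (List.mem_singleton.mp h) hp1
          have hm2' : u2 ∈ (pth hT v (par hT v p)).support := by
            rcases List.mem_append.mp hm2 with h | h
            · exact h
            · exact absurd (List.mem_singleton.mp h) hp2
          exact ih (par hT v p) (by omega) u1 u2 h1 h2 hm1' hm2'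

end Final

theorem stmt18 [Fintype V] (T : SimpleGraph V) (hT : T.IsTree)
    (halpha : Fintype.card V < 2 * alphaNum T) (k : ℕ) (hk : 2 ≤ k)
    (v : V) (hv : v ∈ coreSet T)
    (hdeg : 2 * k ≤ (Finset.univ.filter (fun w => T.Adj v w)).card) :
    2 * k ≤ ((coreSet T).filter (fun u => pendant T u)).card := by


  classical
  rw [coreSet, Finset.mem_filter] at hv
  have hvcore : ∀ S, mstab T Finset.univ S → v ∈ S := fun S hS =>
    hv.2 S ⟨hS.2.1, fun S' hS' => hS.2.2 S' (Finset.subset_univ S') hS'⟩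
  set N := Finset.univ.filter (fun w => T.Adj v w) with hN
  have key : ∀ u : V, ∃ p, u ∈ N →
      (p ∈ (coreSet T).filter (fun x => pendant T x) ∧ u ∈ (pth hT v p).support) := by
    intro u
    by_cases hu : u ∈ N
    · have hadj : T.Adj v u := (Finset.mem_filter.mp hu).2
      obtain ⟨p, hpW, hpv, hpcore, hpnbrs, hparW, hpu⟩ :=
        main_branch hT v (Finset.univ : Finset V).card Finset.univ u le_rfl
          (Finset.mem_univ v) (fun x _ _ => Finset.mem_univ _) (Finset.mem_univ u)
          hadj hvcore
      refine ⟨p, fun _ => ⟨?_, hpu⟩⟩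
      rw [Finset.mem_filter]
      constructor
      · rw [coreSet, Finset.mem_filter]
        exact ⟨Finset.mem_univ p, fun S hS =>
          hpcore S ⟨Finset.subset_univ S, hS.1, fun S' _ h => hS.2 S' h⟩⟩
      · exact ⟨par hT v p, (par_adj hT hpv).symm,
          fun y hy => hpnbrs y (Finset.mem_univ y) hy⟩
    · exact ⟨v, fun h => absurd h hu⟩
  choose f hf using key
  have hinj : Set.InjOn f ↑N := by
    intro u1 hu1 u2 hu2 heq
    rw [Finset.mem_coe] at hu1 hu2
    have h1 := (hf u1 hu1).2
    have h2 := (hf u2 hu2).2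
    rw [heq] at h1
    exact branch_inj hT v (pth hT v (f u2)).length (f u2) le_rfl u1 u2
      (Finset.mem_filter.mp hu1).2 (Finset.mem_filter.mp hu2).2 h1 h2
  have hle := Finset.card_le_card_of_injOn f (fun u hu => (hf u hu).1) hinj
  omega
end
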